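/- arXiv:1411.2544 — 6 statements merged into one kernel-verified Lean document; each statement's English description precedes it below -/
import Mathlib

section
/- The Randić energy of the star graph S_n = K_{1,n-1} on n ≥ 2 vertices equals 2. -/
open scoped Classical
open Polynomial

/-- The Randić matrix of a simple graph: entry `1/√(dᵢ dⱼ)` for adjacent
vertices `vᵢ ∼ vⱼ` and `0` otherwise. -/
noncomputable def randicMatrix {V : Type*} [Fintype V] (G : SimpleGraph V) : Matrix V V ℝ :=
  fun i j => if G.Adj i j then 1 / Real.sqrt ((G.degree i : ℝ) * (G.degree j : ℝ)) else 0

/-- The Randić energy: the sum of the absolute values of the eigenvalues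
of the Randić matrix. -/
noncomputable def randicEnergy {V : Type*} [Fintype V] [DecidableEq V] (G : SimpleGraph V) : ℝ :=
  if h : (randicMatrix G).IsHermitian then ∑ i, |h.eigenvalues i| else 0

/-- The star graph `S n` on `Fin n`, with center `0` adjacent to the `n - 1` leaves. -/
def starGraph (n : ℕ) : SimpleGraph (Fin n) where
  Adj i j := i ≠ j ∧ (i.val = 0 ∨ j.val = 0)
  symm := ⟨fun i j h => ⟨h.1.symm, h.2.symm⟩⟩
  loopless := ⟨fun i h => h.1 rfl⟩


section star
variable {n : ℕ} (hn : 2 ≤ n)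

lemma star_adj (i j : Fin n) : (starGraph n).Adj i j ↔ i ≠ j ∧ (i.val = 0 ∨ j.val = 0) := Iff.rfl

lemma deg_center : (starGraph n).degree ⟨0, by omega⟩ = n - 1 := by
  rw [← SimpleGraph.card_neighborFinset_eq_degree]
  have : (starGraph n).neighborFinset ⟨0, by omega⟩ = Finset.univ.erase ⟨0, by omega⟩ := by
    ext j
    simp [SimpleGraph.mem_neighborFinset, star_adj, eq_comm, Fin.ext_iff]
  rw [this, Finset.card_erase_of_mem (Finset.mem_univ _), Finset.card_univ, Fintype.card_fin]

lemma deg_leaf (i : Fin n) (hi : i.val ≠ 0) : (starGraph n).degree i = 1 := by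
  rw [← SimpleGraph.card_neighborFinset_eq_degree]
  have : (starGraph n).neighborFinset i = {⟨0, by omega⟩} := by
    ext j
    simp only [SimpleGraph.mem_neighborFinset, star_adj, Finset.mem_singleton]
    constructor
    · rintro ⟨hne, h0 | h0⟩
      · exact absurd h0 hi
      · exact Fin.ext h0
    · rintro rfl
      exact ⟨fun h => hi (by rw [h]), Or.inr rfl⟩
  rw [this, Finset.card_singleton]

end star
section star2
variable {n : ℕ}

noncomputable def rcst (n : ℕ) : ℝ := (Real.sqrt ((n:ℝ) - 1))⁻¹

lemma starR_apply (hn : 2 ≤ n) (i j : Fin n) :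
    randicMatrix (starGraph n) i j =
      if (i.val = 0 ∧ j.val ≠ 0) ∨ (i.val ≠ 0 ∧ j.val = 0) then rcst n else 0 := by
  rw [randicMatrix]
  by_cases h : (starGraph n).Adj i j
  · rw [if_pos h]
    obtain ⟨hne, h0 | h0⟩ := h
    · have hj : j.val ≠ 0 := fun hj => hne (Fin.ext (h0.trans hj.symm))
      rw [if_pos (Or.inl ⟨h0, hj⟩)]
      have : i = ⟨0, by omega⟩ := Fin.ext h0
      rw [this]
      rw [deg_center hn, deg_leaf j hj]
      rw [rcst]
      push_cast [Nat.cast_sub (by omega : 1 ≤ n)]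
      rw [mul_one, one_div]
    · have hi : i.val ≠ 0 := fun hi => hne (Fin.ext (hi.trans h0.symm))
      rw [if_pos (Or.inr ⟨hi, h0⟩)]
      have : j = ⟨0, by omega⟩ := Fin.ext h0
      rw [this]
      rw [deg_center hn, deg_leaf i hi]
      rw [rcst]
      push_cast [Nat.cast_sub (by omega : 1 ≤ n)]
      rw [one_mul, one_div]
  · rw [if_neg h, if_neg]
    rintro (⟨h0, hj⟩ | ⟨hi, h0⟩)
    · exact h ⟨fun he => hj (he ▸ h0 : (j:ℕ) = 0), Or.inl h0⟩
    · exact h ⟨fun he => hi (he ▸ h0 : (i:ℕ) = 0), Or.inr h0⟩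

end star2
section star3
variable {n : ℕ}

lemma R_herm : (randicMatrix (starGraph n)).IsHermitian := by
  ext i j
  simp only [Matrix.conjTranspose_apply, randicMatrix, star_trivial]
  by_cases h : (starGraph n).Adj i j
  · rw [if_pos h, if_pos h.symm, mul_comm]
  · rw [if_neg h, if_neg (fun h' => h h'.symm)]

lemma rcst_sq (hn : 2 ≤ n) : rcst n * rcst n = ((n:ℝ) - 1)⁻¹ := by
  have h1 : (0:ℝ) ≤ (n:ℝ) - 1 := by
    have : (1:ℝ) ≤ (n:ℝ) := by exact_mod_cast (by omega : 1 ≤ n)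
    linarith
  rw [rcst, ← mul_inv, Real.mul_self_sqrt h1]

lemma vmv_mul (u v a b : Fin n → ℝ) :
    Matrix.vecMulVec u v * Matrix.vecMulVec a b = (dotProduct v a) • Matrix.vecMulVec u b := by
  ext i j
  simp only [Matrix.mul_apply, Matrix.vecMulVec_apply, Matrix.smul_apply, dotProduct,
    smul_eq_mul, Finset.sum_mul, dotProduct]
  exact Finset.sum_congr rfl fun k _ => by ring

/-- indicator of the center -/
noncomputable def uu (n : ℕ) : Fin n → ℝ := fun k => if k.val = 0 then 1 else 0
/-- scaled indicator of the leaves -/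
noncomputable def vv (n : ℕ) : Fin n → ℝ := fun k => if k.val = 0 then 0 else rcst n

lemma R_eq (hn : 2 ≤ n) :
    randicMatrix (starGraph n)
      = Matrix.vecMulVec (uu n) (vv n) + Matrix.vecMulVec (vv n) (uu n) := by
  ext i j
  rw [Matrix.add_apply, Matrix.vecMulVec_apply, Matrix.vecMulVec_apply, starR_apply hn]
  by_cases hi : i.val = 0 <;> by_cases hj : j.val = 0 <;> simp [uu, vv, hi, hj]

lemma dot_uu_uu (hn : 2 ≤ n) : dotProduct (uu n) (uu n) = 1 := by
  have hz : 0 < n := by omega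
  rw [dotProduct]
  rw [Finset.sum_eq_single (⟨0, hz⟩ : Fin n)]
  · simp [uu]
  · intro k _ hk
    have : k.val ≠ 0 := fun h => hk (Fin.ext h)
    simp [uu, this]
  · simp

lemma dot_uu_vv : dotProduct (uu n) (vv n) = 0 := by
  rw [dotProduct]
  refine Finset.sum_eq_zero fun k _ => ?_
  by_cases h : k.val = 0 <;> simp [uu, vv, h]

lemma dot_vv_uu : dotProduct (vv n) (uu n) = 0 := by
  rw [dotProduct]
  refine Finset.sum_eq_zero fun k _ => ?_
  by_cases h : k.val = 0 <;> simp [uu, vv, h]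

lemma dot_vv_vv (hn : 2 ≤ n) : dotProduct (vv n) (vv n) = 1 := by
  have hz : 0 < n := by omega
  have hne : ((n:ℝ) - 1) ≠ 0 := by
    have : (2:ℝ) ≤ (n:ℝ) := by exact_mod_cast hn
    linarith
  rw [dotProduct]
  have : ∀ k : Fin n, vv n k * vv n k = if k = (⟨0, hz⟩ : Fin n) then 0 else ((n:ℝ)-1)⁻¹ := by
    intro k
    by_cases h : k.val = 0
    · rw [if_pos (Fin.ext h)]; simp [vv, h]
    · rw [if_neg (fun he => h (by rw [he]))]
      simp only [vv, if_neg h]; exact rcst_sq hn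
  rw [Finset.sum_congr rfl fun k _ => this k]
  rw [Finset.sum_ite, Finset.sum_const_zero, zero_add, Finset.sum_const, nsmul_eq_mul]
  have hcard : (Finset.univ.filter (fun k : Fin n => ¬ k = (⟨0, hz⟩ : Fin n))).card = n - 1 := by
    rw [Finset.filter_not, Finset.filter_eq', if_pos (Finset.mem_univ _)]
    rw [Finset.card_sdiff_of_subset (Finset.singleton_subset_iff.2 (Finset.mem_univ _))]
    simp
  rw [hcard]
  rw [Nat.cast_sub (by omega : 1 ≤ n)]
  push_cast
  exact mul_inv_cancel₀ hne

lemma R_cube (hn : 2 ≤ n) :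
    randicMatrix (starGraph n) * randicMatrix (starGraph n) * randicMatrix (starGraph n)
      = randicMatrix (starGraph n) := by
  rw [R_eq hn]
  simp only [Matrix.add_mul, Matrix.mul_add, vmv_mul, dot_uu_uu hn, dot_uu_vv, dot_vv_uu,
    dot_vv_vv hn, one_smul, zero_smul, Matrix.smul_mul, Matrix.mul_smul, add_zero, zero_add,
    Matrix.zero_mul, Matrix.mul_zero]

lemma R_sq_trace (hn : 2 ≤ n) :
    (randicMatrix (starGraph n) * randicMatrix (starGraph n)).trace = 2 := by
  rw [R_eq hn]
  simp only [Matrix.add_mul, Matrix.mul_add, vmv_mul, dot_uu_uu hn, dot_uu_vv, dot_vv_uu,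
    dot_vv_vv hn, one_smul, zero_smul, add_zero, zero_add]
  rw [Matrix.trace_add]
  have t1 : (Matrix.vecMulVec (uu n) (uu n)).trace = 1 := by
    rw [Matrix.trace]
    simpa [Matrix.diag, Matrix.vecMulVec_apply, dotProduct] using dot_uu_uu hn
  have t2 : (Matrix.vecMulVec (vv n) (vv n)).trace = 1 := by
    rw [Matrix.trace]
    simpa [Matrix.diag, Matrix.vecMulVec_apply, dotProduct] using dot_vv_vv hn
  rw [t1, t2]; norm_num

end star3
section spec
open Matrix
variable {m : Type*} [Fintype m] [DecidableEq m]

lemma trace_sq_eq_sum_eig_sq (A : Matrix m m ℝ) (hA : A.IsHermitian) :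
    (A * A).trace = ∑ i, hA.eigenvalues i ^ 2 := by
  set U : Matrix m m ℝ := ↑(hA.eigenvectorUnitary) with hU
  set D : Matrix m m ℝ := Matrix.diagonal (RCLike.ofReal ∘ hA.eigenvalues) with hD
  have hsu : Uᴴ * U = 1 := (Matrix.mem_unitaryGroup_iff').mp hA.eigenvectorUnitary.2
  have h1 : A = U * D * Uᴴ := by
    rw [hU, hD]
    simpa [Matrix.star_eq_conjTranspose, RCLike.ofReal_real_eq_id] using hA.spectral_theorem
  have h2 : A * A = U * (D * D) * Uᴴ := by
    rw [h1]
    rw [show U * D * Uᴴ * (U * D * Uᴴ) = U * D * (Uᴴ * U) * (D * Uᴴ) by noncomm_ring, hsu,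
      Matrix.mul_one]
    noncomm_ring
  rw [h2, Matrix.trace_mul_cycle, ← Matrix.mul_assoc, hsu, Matrix.one_mul,
    Matrix.diagonal_mul_diagonal, Matrix.trace_diagonal]
  simp [pow_two]

lemma eig_cube (A : Matrix m m ℝ) (hA : A.IsHermitian) (hA3 : A * A * A = A) (i : m) :
    hA.eigenvalues i ^ 3 = hA.eigenvalues i := by
  set lam := hA.eigenvalues i with hl
  set v : m → ℝ := ⇑(hA.eigenvectorBasis i) with hv
  have hev : A *ᵥ v = lam • v := hA.mulVec_eigenvectorBasis i
  have h3 : (A * A * A) *ᵥ v = (lam ^ 3) • v := by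
    simp only [← Matrix.mulVec_mulVec, hev, Matrix.mulVec_smul, smul_smul]
    ring_nf
  rw [hA3, hev] at h3
  have hvne : v ≠ 0 := by
    intro h
    exact hA.eigenvectorBasis.orthonormal.ne_zero i (by ext k; exact congrFun h k)
  have := sub_eq_zero.mpr h3
  rw [← sub_smul, smul_eq_zero] at this
  rcases this with h | h
  · linarith
  · exact absurd h hvne

end spec

theorem stmt1 (n : ℕ) (hn : 2 ≤ n) : randicEnergy (starGraph n) = 2 := by
  rw [randicEnergy, dif_pos (R_herm (n := n))]
  have hc : ∀ i : Fin n, (R_herm (n := n)).eigenvalues i ^ 3 = (R_herm (n := n)).eigenvalues i :=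
    fun i => eig_cube _ _ (R_cube hn) i
  have habs : ∀ i : Fin n, |(R_herm (n := n)).eigenvalues i| = (R_herm (n := n)).eigenvalues i ^ 2 := by
    intro i
    set lam := (R_herm (n := n)).eigenvalues i with hl
    have h0 : lam * ((lam - 1) * (lam + 1)) = 0 := by linear_combination hc i
    rcases mul_eq_zero.1 h0 with h | h
    · rw [h]; norm_num
    · rcases mul_eq_zero.1 h with h | h
      · rw [sub_eq_zero.1 h]; norm_num
      · rw [show lam = -1 by linarith]; norm_num
  rw [Finset.sum_congr rfl fun i _ => habs i, ← trace_sq_eq_sum_eig_sq _ (R_herm (n := n)),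
    R_sq_trace hn]
end

section
/- For n ≥ 2, the Randić characteristic polynomial of the friendship graph F_n is (λ² − 1/4)^{n−1}(λ − 1)(λ + 1/2)². -/
open scoped Classical
open Polynomial

/-- The friendship graph `F n`: `n` triangles sharing the common vertex `none`. -/
def friendshipGraph (n : ℕ) : SimpleGraph (Option (Fin n × Fin 2)) where
  Adj x y := (x = none ∧ y ≠ none) ∨ (y = none ∧ x ≠ none) ∨
    (∃ i a b, a ≠ b ∧ x = some (i, a) ∧ y = some (i, b))
  symm := by
    constructor
    rintro x y (⟨h1, h2⟩ | ⟨h1, h2⟩ | ⟨i, a, b, hab, hx, hy⟩)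
    · exact Or.inr (Or.inl ⟨h1, h2⟩)
    · exact Or.inl ⟨h1, h2⟩
    · exact Or.inr (Or.inr ⟨i, b, a, hab.symm, hy, hx⟩)
  loopless := by
    constructor
    rintro x (⟨h1, h2⟩ | ⟨h1, h2⟩ | ⟨i, a, b, hab, hx, hy⟩)
    · exact h2 h1
    · exact h2 h1
    · rw [hx] at hy; simp at hy; exact hab hy

lemma adj_none_some (n : ℕ) (p : Fin n × Fin 2) :
    (friendshipGraph n).Adj none (some p) := Or.inl ⟨rfl, by simp⟩

lemma adj_some_some_iff (n : ℕ) (k1 j1 : Fin n) (k2 j2 : Fin 2) :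
    (friendshipGraph n).Adj (some (k1, k2)) (some (j1, j2)) ↔ k1 = j1 ∧ k2 ≠ j2 := by
  constructor
  · rintro (⟨h, -⟩ | ⟨h, -⟩ | ⟨i, a, b, hab, h1, h2⟩)
    · exact absurd h (by simp)
    · exact absurd h (by simp)
    · simp only [Option.some.injEq, Prod.mk.injEq] at h1 h2
      refine ⟨h1.1.trans h2.1.symm, ?_⟩
      rw [h1.2, h2.2]; exact hab
  · rintro ⟨h1, h2⟩
    exact Or.inr (Or.inr ⟨k1, k2, j2, h2, rfl, by rw [h1]⟩)

lemma degree_none (n : ℕ) : (friendshipGraph n).degree none = 2 * n := by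
  have h : (friendshipGraph n).neighborFinset none = Finset.univ.erase none := by
    ext x
    cases x with
    | none => simp
    | some p => simp [SimpleGraph.mem_neighborFinset, adj_none_some]
  show ((friendshipGraph n).neighborFinset none).card = 2 * n
  rw [h, Finset.card_erase_of_mem (Finset.mem_univ _), Finset.card_univ]
  simp; omega

lemma degree_some (n : ℕ) (i : Fin n) (a : Fin 2) :
    (friendshipGraph n).degree (some (i, a)) = 2 := by
  have h : (friendshipGraph n).neighborFinset (some (i, a)) = {none, some (i, a + 1)} := by
    ext x
    cases x with
    | none =>
      simp [SimpleGraph.mem_neighborFinset, ((friendshipGraph n).adj_comm _ _).mp (adj_none_some n (i,a))]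
    | some p =>
      obtain ⟨j, b⟩ := p
      simp [SimpleGraph.mem_neighborFinset, adj_some_some_iff, eq_comm (a := i)]
      intro _
      revert a b; decide
  show ((friendshipGraph n).neighborFinset (some (i,a))).card = 2
  rw [h]
  rw [Finset.card_insert_of_notMem (by simp), Finset.card_singleton]

/-- Explicit form of the Randić matrix of the friendship graph. -/
noncomputable def Rm (n : ℕ) : Matrix (Option (Fin n × Fin 2)) (Option (Fin n × Fin 2)) ℝ
  | none, none => 0
  | none, some _ => 1 / (2 * Real.sqrt n)
  | some _, none => 1 / (2 * Real.sqrt n)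
  | some (k1, k2), some (j1, j2) => if k1 = j1 ∧ k2 ≠ j2 then 1/2 else 0

lemma sqrt_four : Real.sqrt 4 = 2 := by
  rw [show (4:ℝ) = 2^2 by norm_num, Real.sqrt_sq (by norm_num)]

lemma randic_eq (n : ℕ) : randicMatrix (friendshipGraph n) = Rm n := by
  funext k j
  have hc : ∀ p : Fin n × Fin 2,
      Real.sqrt (((friendshipGraph n).degree none : ℝ) * ((friendshipGraph n).degree (some p) : ℝ))
        = 2 * Real.sqrt n := by
    intro ⟨i, a⟩
    rw [degree_none, degree_some]
    push_cast
    rw [show (2*(n:ℝ))*2 = 4 * n by ring, Real.sqrt_mul (by norm_num), sqrt_four]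
  cases k with
  | none =>
    cases j with
    | none => simp [randicMatrix, Rm]
    | some p => simp [randicMatrix, Rm, adj_none_some, hc p]
  | some p =>
    obtain ⟨k1, k2⟩ := p
    cases j with
    | none =>
      have : (friendshipGraph n).Adj (some (k1,k2)) none :=
        ((friendshipGraph n).adj_comm _ _).mp (adj_none_some n (k1,k2))
      rw [randicMatrix]
      simp only [this, if_true, Rm]
      rw [mul_comm, hc (k1,k2)]
    | some q =>
      obtain ⟨j1, j2⟩ := q
      rw [randicMatrix]
      simp only [Rm, adj_some_some_iff]
      by_cases h : k1 = j1 ∧ k2 ≠ j2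
      · simp only [h, if_true, degree_some]
        norm_num [sqrt_four]
      · simp [h]

/-- Matrix of (column) eigenvectors of the Randić matrix of the friendship graph. -/
noncomputable def Pm (n : ℕ) : Matrix (Option (Fin n × Fin 2)) (Option (Fin n × Fin 2)) ℝ
  | none, none => Real.sqrt n
  | some _, none => 1
  | none, some (i, a) => if a = 0 then 0 else if i.val = 0 then -2 * Real.sqrt n else 0
  | some (k1, k2), some (i, a) =>
      if a = 0 then (if k1 = i then (if k2 = 0 then 1 else -1) else 0)
      else if i.val = 0 then 1
      else (if k1.val = 0 then 1 else 0) - (if k1 = i then 1 else 0)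

/-- Explicit inverse of `Pm`. -/
noncomputable def Qm (n : ℕ) : Matrix (Option (Fin n × Fin 2)) (Option (Fin n × Fin 2)) ℝ
  | none, none => Real.sqrt n / (3 * n)
  | none, some _ => 1 / (3 * n)
  | some (i, a), none => if a = 0 then 0 else if i.val = 0 then -Real.sqrt n / (3 * n) else 0
  | some (i, a), some (j1, j2) =>
      if a = 0 then (if i = j1 then (if j2 = 0 then 1/2 else -(1/2)) else 0)
      else if i.val = 0 then 1 / (6 * n)
      else 1 / (2 * n) - (if j1 = i then 1/2 else 0)

/-- Eigenvalues. -/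
noncomputable def Dv (n : ℕ) : Option (Fin n × Fin 2) → ℝ
  | none => 1
  | some (i, a) => if a = 0 then -(1/2) else if i.val = 0 then -(1/2) else 1/2



set_option maxHeartbeats 1000000 in
lemma QP (n : ℕ) (hn : 2 ≤ n) : Qm n * Pm n = 1 := by
  haveI : NeZero n := ⟨by omega⟩
  have hn0 : (n : ℝ) ≠ 0 := Nat.cast_ne_zero.mpr (by omega)
  have hv : ∀ x : Fin n, x.val = 0 ↔ x = 0 := fun x => by rw [Fin.ext_iff, Fin.val_zero]
  have hr2 : Real.sqrt n ^ 2 = (n : ℝ) := Real.sq_sqrt (Nat.cast_nonneg n)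
  have hr : Real.sqrt n * Real.sqrt n = (n : ℝ) := Real.mul_self_sqrt (Nat.cast_nonneg n)
  ext k j
  rcases k with _ | ⟨i, a⟩ <;> rcases j with _ | ⟨j1, j2⟩
  · simp only [Matrix.mul_apply, Fintype.sum_option, Fintype.sum_prod_type, Fin.sum_univ_two,
      Pm, Qm, Matrix.one_apply, if_pos rfl]
    simp [Finset.sum_add_distrib, Finset.sum_sub_distrib, mul_sub, sub_mul, mul_ite, ite_mul,
      Finset.sum_ite_eq, Finset.sum_ite_eq', hv, Finset.card_univ]
    field_simp
    linear_combination hr2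
  · simp only [Matrix.mul_apply, Fintype.sum_option, Fintype.sum_prod_type, Fin.sum_univ_two,
      Pm, Qm, Matrix.one_apply]
    fin_cases j2 <;> rcases eq_or_ne j1 0 with rfl | hj <;>
      simp [*, Finset.sum_add_distrib, Finset.sum_sub_distrib, mul_sub, sub_mul, mul_ite,
        ite_mul, Finset.sum_ite_eq, Finset.sum_ite_eq', Finset.card_univ, Prod.ext_iff] <;>
      first
      | (ring; done)
      | (rw [hr2]; (try field_simp); (try ring); done)
      | (ring_nf; (try rw [hr2]); (try field_simp); (try ring); done)
      | (field_simp; (try ring_nf); (try rw [hr2]); (try ring); done)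
      | (simp_all [eq_comm, Prod.ext_iff]; (try field_simp); (try ring); done)
      | (exact fun h => hi h.symm)
      | (rw [if_neg fun h => hi h.symm]; norm_num; done)
      | skip
  · simp only [Matrix.mul_apply, Fintype.sum_option, Fintype.sum_prod_type, Fin.sum_univ_two,
      Pm, Qm, Matrix.one_apply]
    fin_cases a <;> rcases eq_or_ne i 0 with rfl | hi <;>
      simp [*, Finset.sum_add_distrib, Finset.sum_sub_distrib, mul_sub, sub_mul, mul_ite,
        ite_mul, Finset.sum_ite_eq, Finset.sum_ite_eq', Finset.card_univ, Prod.ext_iff] <;>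
      first
      | (ring; done)
      | (rw [hr2]; (try field_simp); (try ring); done)
      | (ring_nf; (try rw [hr2]); (try field_simp); (try ring); done)
      | (field_simp; (try ring_nf); (try rw [hr2]); (try ring); done)
      | (simp_all [eq_comm, Prod.ext_iff]; (try field_simp); (try ring); done)
      | (exact fun h => hi h.symm)
      | (rw [if_neg fun h => hi h.symm]; norm_num; done)
      | skip
  · simp only [Matrix.mul_apply, Fintype.sum_option, Fintype.sum_prod_type, Fin.sum_univ_two,
      Pm, Qm, Matrix.one_apply]
    rcases eq_or_ne i j1 with rfl | hij
    · fin_cases a <;> fin_cases j2 <;> rcases eq_or_ne i 0 with rfl | hi <;>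
        simp [*, Finset.sum_add_distrib, Finset.sum_sub_distrib, mul_sub, sub_mul, mul_ite,
          ite_mul, Finset.sum_ite_eq, Finset.sum_ite_eq', Finset.card_univ, Prod.ext_iff] <;>
        first
        | (ring; done)
        | (rw [hr2]; (try field_simp); (try ring); done)
        | (ring_nf; (try rw [hr2]); (try field_simp); (try ring); done)
        | (field_simp; (try ring_nf); (try rw [hr2]); (try ring); done)
        | (simp_all [eq_comm, Prod.ext_iff]; (try field_simp); (try ring); done)
        | (exact fun h => hi h.symm)
        | (rw [if_neg fun h => hi h.symm]; norm_num; done)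
        | (simp_all [eq_comm, Prod.ext_iff]; (try field_simp); (try ring); done)
        | skip
    · fin_cases a <;> fin_cases j2 <;>
        rcases eq_or_ne i 0 with rfl | hi <;> rcases eq_or_ne j1 0 with rfl | hj <;>
        first
        | exact absurd rfl hij
        | (simp [*, hij.symm, Finset.sum_add_distrib, Finset.sum_sub_distrib,
            mul_sub, sub_mul, mul_ite, ite_mul, Finset.sum_ite_eq, Finset.sum_ite_eq',
            Finset.card_univ, Prod.ext_iff] <;>
           first
           | (ring; done)
           | (rw [hr2]; (try field_simp); (try ring); done)
           | (ring_nf; (try rw [hr2]); (try field_simp); (try ring); done)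
           | (field_simp; (try ring_nf); (try rw [hr2]); (try ring); done)
           | (simp_all [eq_comm, Prod.ext_iff]; (try field_simp); (try ring); done)
           | (exact fun h => hi h.symm)
           | (rw [if_neg fun h => hi h.symm]; norm_num; done)
           | skip)

set_option maxHeartbeats 1000000 in
lemma RP (n : ℕ) (hn : 2 ≤ n) : Rm n * Pm n = Pm n * Matrix.diagonal (Dv n) := by
  haveI : NeZero n := ⟨by omega⟩
  have hn0 : (n : ℝ) ≠ 0 := Nat.cast_ne_zero.mpr (by omega)
  have hv : ∀ x : Fin n, x.val = 0 ↔ x = 0 := fun x => by rw [Fin.ext_iff, Fin.val_zero]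
  have hr2 : Real.sqrt n ^ 2 = (n : ℝ) := Real.sq_sqrt (Nat.cast_nonneg n)
  have hr : Real.sqrt n * Real.sqrt n = (n : ℝ) := Real.mul_self_sqrt (Nat.cast_nonneg n)
  have hrne : Real.sqrt n ≠ 0 := by
    rw [ne_eq, Real.sqrt_eq_zero (Nat.cast_nonneg n)]; exact hn0
  ext k j
  rw [Matrix.mul_diagonal]
  rcases k with _ | ⟨i, a⟩ <;> rcases j with _ | ⟨j1, j2⟩
  · simp only [Matrix.mul_apply, Fintype.sum_option, Fintype.sum_prod_type, Fin.sum_univ_two,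
      Pm, Rm, Dv]
    simp [Finset.sum_add_distrib, Finset.sum_sub_distrib, mul_sub, sub_mul, mul_ite, ite_mul,
      Finset.sum_ite_eq, Finset.sum_ite_eq', hv, Finset.card_univ]
    field_simp
    linear_combination (-2) * hr
  · simp only [Matrix.mul_apply, Fintype.sum_option, Fintype.sum_prod_type, Fin.sum_univ_two,
      Pm, Rm, Dv]
    fin_cases j2 <;> rcases eq_or_ne j1 0 with rfl | hj <;>
      simp [*, Finset.sum_add_distrib, Finset.sum_sub_distrib, mul_sub, sub_mul, mul_ite,
        ite_mul, Finset.sum_ite_eq, Finset.sum_ite_eq', Finset.card_univ, Prod.ext_iff] <;>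
      first
      | (ring; done)
      | (rw [hr2]; (try field_simp); (try ring); done)
      | (ring_nf; (try rw [hr2]); (try field_simp); (try ring); done)
      | (field_simp; (try ring_nf); (try rw [hr2]); (try ring); done)
      | (simp_all [eq_comm, Prod.ext_iff]; (try field_simp); (try ring); done)
      | (exact fun h => hi h.symm)
      | (rw [if_neg fun h => hi h.symm]; norm_num; done)
      | skip
  · simp only [Matrix.mul_apply, Fintype.sum_option, Fintype.sum_prod_type, Fin.sum_univ_two,
      Pm, Rm, Dv]
    fin_cases a <;> rcases eq_or_ne i 0 with rfl | hi <;>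
      simp [*, Finset.sum_add_distrib, Finset.sum_sub_distrib, mul_sub, sub_mul, mul_ite,
        ite_mul, Finset.sum_ite_eq, Finset.sum_ite_eq', Finset.card_univ, Prod.ext_iff] <;>
      first
      | (ring; done)
      | (rw [hr2]; (try field_simp); (try ring); done)
      | (ring_nf; (try rw [hr2]); (try field_simp); (try ring); done)
      | (field_simp; (try ring_nf); (try rw [hr2]); (try ring); done)
      | (simp_all [eq_comm, Prod.ext_iff]; (try field_simp); (try ring); done)
      | (exact fun h => hi h.symm)
      | (rw [if_neg fun h => hi h.symm]; norm_num; done)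
      | skip
  · simp only [Matrix.mul_apply, Fintype.sum_option, Fintype.sum_prod_type, Fin.sum_univ_two,
      Pm, Rm, Dv]
    rcases eq_or_ne i j1 with rfl | hij
    · fin_cases a <;> fin_cases j2 <;> rcases eq_or_ne i 0 with rfl | hi <;>
        simp [*, Finset.sum_add_distrib, Finset.sum_sub_distrib, mul_sub, sub_mul, mul_ite,
          ite_mul, Finset.sum_ite_eq, Finset.sum_ite_eq', Finset.card_univ, Prod.ext_iff] <;>
        first
        | (ring; done)
        | (rw [hr2]; (try field_simp); (try ring); done)
        | (ring_nf; (try rw [hr2]); (try field_simp); (try ring); done)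
        | (field_simp; (try ring_nf); (try rw [hr2]); (try ring); done)
        | (simp_all [eq_comm, Prod.ext_iff]; (try field_simp); (try ring); done)
        | (exact fun h => hi h.symm)
        | (rw [if_neg fun h => hi h.symm]; norm_num; done)
        | skip
    · fin_cases a <;> fin_cases j2 <;>
        rcases eq_or_ne i 0 with rfl | hi <;> rcases eq_or_ne j1 0 with rfl | hj <;>
        first
        | exact absurd rfl hij
        | (simp [*, hij.symm, Finset.sum_add_distrib, Finset.sum_sub_distrib,
            mul_sub, sub_mul, mul_ite, ite_mul, Finset.sum_ite_eq, Finset.sum_ite_eq',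
            Finset.card_univ, Prod.ext_iff] <;>
           first
           | (ring; done)
           | (rw [hr2]; (try field_simp); (try ring); done)
           | (ring_nf; (try rw [hr2]); (try field_simp); (try ring); done)
           | (field_simp; (try ring_nf); (try rw [hr2]); (try ring); done)
           | (simp_all [eq_comm, Prod.ext_iff]; (try field_simp); (try ring); done)
           | (exact fun h => hi h.symm)
           | (rw [if_neg fun h => hi h.symm]; norm_num; done)
           | skip)

lemma charpoly_PAQ {m : Type*} [Fintype m] [DecidableEq m] {R : Type*} [CommRing R]
    (P A Q : Matrix m m R) (h : Q * P = 1) : (P * A * Q).charpoly = A.charpoly := by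
  have hPQ : P * Q = 1 := mul_eq_one_comm.mpr h
  have hfPQ : (Polynomial.C : R →+* R[X]).mapMatrix P * (Polynomial.C : R →+* R[X]).mapMatrix Q
      = (1 : Matrix m m R[X]) := by
    rw [← map_mul, hPQ, map_one]
  have hscalar : (Matrix.scalar m (X : R[X])) = (X : R[X]) • (1 : Matrix m m R[X]) := by
    ext i j
    by_cases hij : i = j <;>
      simp [Matrix.scalar_apply, Matrix.smul_apply, Matrix.one_apply, hij,
        Matrix.diagonal_apply_eq, Matrix.diagonal_apply_ne]
  have key : Matrix.charmatrix (P * A * Q) =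
      (Polynomial.C : R →+* R[X]).mapMatrix P * Matrix.charmatrix A
        * (Polynomial.C : R →+* R[X]).mapMatrix Q := by
    rw [Matrix.charmatrix, Matrix.charmatrix, hscalar, mul_sub, sub_mul]
    congr 1
    · rw [mul_smul_comm, mul_one, smul_mul_assoc, hfPQ]
    · rw [← map_mul, ← map_mul]
  rw [Matrix.charpoly, Matrix.charpoly, key, Matrix.det_mul, Matrix.det_mul]
  have hdet : ((Polynomial.C : R →+* R[X]).mapMatrix P).det
      * ((Polynomial.C : R →+* R[X]).mapMatrix Q).det = 1 := by
    rw [← Matrix.det_mul, hfPQ, Matrix.det_one]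
  calc ((Polynomial.C : R →+* R[X]).mapMatrix P).det * (Matrix.charmatrix A).det
        * ((Polynomial.C : R →+* R[X]).mapMatrix Q).det
      = (Matrix.charmatrix A).det * (((Polynomial.C : R →+* R[X]).mapMatrix P).det
        * ((Polynomial.C : R →+* R[X]).mapMatrix Q).det) := by ring
    _ = (Matrix.charmatrix A).det := by rw [hdet, mul_one]

lemma charpoly_diag {m : Type*} [Fintype m] [DecidableEq m] {R : Type*} [CommRing R]
    (d : m → R) : (Matrix.diagonal d).charpoly = ∏ i, (X - C (d i)) := by
  rw [Matrix.charpoly]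
  have h : Matrix.charmatrix (Matrix.diagonal d) = Matrix.diagonal (fun i => (X : R[X]) - C (d i)) := by
    apply Matrix.ext; intro i j
    by_cases hij : i = j
    · subst hij; simp [Matrix.charmatrix_apply_eq, Matrix.diagonal_apply_eq]

    · rw [Matrix.charmatrix_apply_ne _ _ _ hij, Matrix.diagonal_apply_ne _ hij,
        Matrix.diagonal_apply_ne _ hij]
      simp
  rw [h, Matrix.det_diagonal]

theorem stmt6 (n : ℕ) (hn : 2 ≤ n) :
    (randicMatrix (friendshipGraph n)).charpoly =
      (X ^ 2 - C (1 / 4)) ^ (n - 1) * (X - 1) * (X + C (1 / 2)) ^ 2 := by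
  haveI : NeZero n := ⟨by omega⟩
  have h1 := QP n hn
  have h2 : Pm n * Qm n = 1 := mul_eq_one_comm.mp h1
  have hM : randicMatrix (friendshipGraph n) = Pm n * Matrix.diagonal (Dv n) * Qm n := by
    rw [randic_eq n]
    calc Rm n = Rm n * (Pm n * Qm n) := by rw [h2, Matrix.mul_one]
      _ = Rm n * Pm n * Qm n := by rw [Matrix.mul_assoc]
      _ = Pm n * Matrix.diagonal (Dv n) * Qm n := by rw [RP n hn]
  rw [hM, charpoly_PAQ _ _ _ h1, charpoly_diag]
  rw [Fintype.prod_option, Fintype.prod_prod_type]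
  simp only [Fin.prod_univ_two, Dv]
  norm_num
  -- now a product over Fin n
  have hstep : ∀ i : Fin n,
      (X + C (1/2 : ℝ)) * (X - C (if i = 0 then (-(1/2) : ℝ) else 1/2))
        = (X + C (1/2 : ℝ)) * (if i = 0 then X + C (1/2 : ℝ) else X - C (1/2 : ℝ)) := by
    intro i
    by_cases hi : i = 0
    · simp [hi, map_neg, sub_neg_eq_add]
    · have hiv : ¬ (i : ℕ) = 0 := by
        intro hc
        exact hi (by rw [Fin.ext_iff, hc, Fin.val_zero])
      simp [hi, hiv, map_neg, sub_neg_eq_add]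
  rw [Finset.prod_congr rfl (fun x _ => hstep x)]
  rw [← Finset.mul_prod_erase Finset.univ _ (Finset.mem_univ (0 : Fin n))]
  rw [if_pos rfl]
  have herase : ∀ x ∈ Finset.univ.erase (0 : Fin n),
      (X + C (1/2 : ℝ)) * (if x = 0 then X + C (1/2 : ℝ) else X - C (1/2 : ℝ))
        = (X + C (1/2 : ℝ)) * (X - C (1/2 : ℝ)) :=
    fun x hx => by rw [if_neg (Finset.ne_of_mem_erase hx)]
  rw [Finset.prod_congr rfl herase, Finset.prod_const,
    Finset.card_erase_of_mem (Finset.mem_univ _), Finset.card_univ, Fintype.card_fin]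
  have hq : (X + C (1/2 : ℝ)) * (X - C (1/2 : ℝ)) = X ^ 2 - C (1/4 : ℝ) := by
    rw [show (1/4 : ℝ) = (1/2) * (1/2) by norm_num, C_mul]; ring
  rw [hq]
  ring
end

section
/- For every natural number m ≥ 2, there exists a simple graph G such that the Randić energy RE(G) = m. In particular, the Randić energy can be an odd integer. -/
open scoped Classical
open Polynomial

namespace FrdAux
open Matrix

/-! ### Generic spectral lemmas -/

variable {n : Type*} [Fintype n] [DecidableEq n] {A : Matrix n n ℝ} (hA : A.IsHermitian)

theorem sum_sq_eig : ∑ i, (hA.eigenvalues i)^2 = (A*A).trace := by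
  set U : Matrix n n ℝ := (hA.eigenvectorUnitary : Matrix n n ℝ) with hUdef
  set D : Matrix n n ℝ := Matrix.diagonal (RCLike.ofReal ∘ hA.eigenvalues) with hD
  have h1 : star U * U = 1 := (Matrix.mem_unitaryGroup_iff').mp (hA.eigenvectorUnitary).2
  have hspec : A = U * D * star U := hA.spectral_theorem
  have hAA : A * A = U * (D * D) * star U := by
    rw [hspec]
    simp only [Matrix.mul_assoc]
    rw [← Matrix.mul_assoc (star U) U, h1, Matrix.one_mul]
  rw [hAA, Matrix.trace_mul_comm, ← Matrix.mul_assoc, h1, Matrix.one_mul]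
  rw [hD, Matrix.diagonal_mul_diagonal, Matrix.trace_diagonal]
  simp [sq]

theorem eig_cubic (hcube : A * A * A = A * A + (4:ℝ)⁻¹ • A - (4:ℝ)⁻¹ • 1) (i : n) :
    (hA.eigenvalues i - 1) * (hA.eigenvalues i - 1/2) * (hA.eigenvalues i + 1/2) = 0 := by
  set μ := hA.eigenvalues i with hμ
  set v := ⇑(hA.eigenvectorBasis i) with hv
  have hv1 : A *ᵥ v = μ • v := hA.mulVec_eigenvectorBasis i
  have hv2 : (A * A) *ᵥ v = (μ^2) • v := by
    rw [← Matrix.mulVec_mulVec, hv1, Matrix.mulVec_smul, hv1, smul_smul, sq]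
  have hv3 : (A * A * A) *ᵥ v = (μ^3) • v := by
    rw [← Matrix.mulVec_mulVec, hv1, Matrix.mulVec_smul, hv2, smul_smul]
    ring_nf
  have hne : v ≠ 0 := by
    have h2 := hA.eigenvectorBasis.orthonormal.ne_zero i
    intro h
    apply h2
    ext j
    exact congrFun h j
  have key := congrArg (fun B => B *ᵥ v) hcube
  simp only [hv3, Matrix.sub_mulVec, Matrix.add_mulVec, Matrix.smul_mulVec, hv1, hv2,
    Matrix.one_mulVec] at key
  have h0 : (μ^3 - μ^2 - (4:ℝ)⁻¹ * μ + (4:ℝ)⁻¹) • v = 0 := by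
    rw [add_smul, sub_smul, sub_smul, mul_smul, key]
    abel
  rcases smul_eq_zero.mp h0 with h | h
  · nlinarith [h]
  · exact absurd h hne

theorem abs_of_cubic {x : ℝ} (h : (x - 1) * (x - 1/2) * (x + 1/2) = 0) :
    |x| = (2 * x^2 + 1) / 3 := by
  rcases mul_eq_zero.mp h with h' | h'
  · rcases mul_eq_zero.mp h' with h'' | h''
    · have : x = 1 := by linarith
      rw [this]; norm_num
    · have : x = 1/2 := by linarith
      rw [this]; norm_num
  · have : x = -(1/2) := by linarith
    rw [this]; norm_num [abs_of_neg]

/-! ### The friendship graph -/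

abbrev Vk (k : ℕ) := Option (Fin k × Fin 2)

@[simp] lemma fin2_add (x : Fin 2) : x + 1 + 1 = x := by fin_cases x <;> rfl

lemma fin2_ne_iff {x y : Fin 2} : x ≠ y ↔ x = y + 1 := by
  fin_cases x <;> fin_cases y <;> simp [Fin.ext_iff]

def G (k : ℕ) : SimpleGraph (Vk k) where
  Adj u v := u ≠ v ∧ (u = none ∨ v = none ∨ u.map Prod.fst = v.map Prod.fst)
  symm := ⟨by rintro u v ⟨h1, h2⟩; exact ⟨h1.symm, by tauto⟩⟩
  loopless := ⟨by rintro u ⟨h1, _⟩; exact h1 rfl⟩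

lemma adj_none_iff {k : ℕ} (v : Vk k) : (G k).Adj none v ↔ v ≠ none := by
  constructor
  · rintro ⟨h1, _⟩; exact fun h => h1 h.symm
  · intro h; exact ⟨fun h' => h h'.symm, Or.inl rfl⟩

lemma some_ne_partner {k : ℕ} (p : Fin k × Fin 2) : p ≠ (p.1, p.2 + 1) := by
  intro h
  have := congrArg Prod.snd h
  simp only at this
  exact (fin2_ne_iff.mpr this) rfl

lemma adj_some_iff {k : ℕ} (p : Fin k × Fin 2) (v : Vk k) :
    (G k).Adj (some p) v ↔ v = none ∨ v = some (p.1, p.2 + 1) := by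
  cases v with
  | none => simp [adj_none_iff, (G k).adj_comm]
  | some q =>
    simp only [G, ne_eq, Option.some.injEq, Option.map_some, reduceCtorEq, false_or]
    constructor
    · rintro ⟨h1, h2⟩
      have hfst : p.1 = q.1 := h2
      have hsnd : q.2 = p.2 + 1 := by
        rw [← fin2_ne_iff]
        intro h
        exact h1 (Prod.ext hfst h.symm)
      exact Prod.ext hfst.symm hsnd
    · rintro rfl
      exact ⟨fun h' => some_ne_partner p h', rfl⟩

lemma degree_none {k : ℕ} : (G k).degree none = 2 * k := by
  have h : (G k).neighborFinset none = {(none : Vk k)}ᶜ := by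
    ext v
    simp [SimpleGraph.mem_neighborFinset, adj_none_iff]
  rw [SimpleGraph.degree, h, Finset.card_compl, Finset.card_singleton]
  simp [Fintype.card_option, Fintype.card_prod]
  omega

lemma degree_some {k : ℕ} (p : Fin k × Fin 2) : (G k).degree (some p) = 2 := by
  have h : (G k).neighborFinset (some p) = {none, some (p.1, p.2 + 1)} := by
    ext v
    simp [SimpleGraph.mem_neighborFinset, adj_some_iff]
  rw [SimpleGraph.degree, h]
  rw [Finset.card_insert_of_notMem (by simp), Finset.card_singleton]

/-! ### The Randić matrix of the friendship graph -/

noncomputable def M (k : ℕ) : Matrix (Vk k) (Vk k) ℝ := fun u v =>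
  match u, v with
  | none, none => 0
  | none, some _ => 1 / (2 * Real.sqrt k)
  | some _, none => 1 / (2 * Real.sqrt k)
  | some p, some q => if q = (p.1, p.2 + 1) then 1/2 else 0

variable {k : ℕ} (hk : 1 ≤ k)

lemma partner_eq_iff (p q : Fin k × Fin 2) : q = (p.1, p.2 + 1) ↔ p = (q.1, q.2 + 1) := by
  constructor <;> rintro rfl <;> simp [Prod.ext_iff]

lemma partner_inj (p q : Fin k × Fin 2) :
    ((p.1, p.2 + 1) : Fin k × Fin 2) = (q.1, q.2 + 1) ↔ p = q := by
  constructor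
  · intro h
    rw [Prod.ext_iff] at h ⊢
    obtain ⟨h1, h2⟩ := h
    exact ⟨h1, add_right_cancel h2⟩
  · rintro rfl; rfl

include hk in
lemma sqrt_pos : (0:ℝ) < Real.sqrt k :=
  Real.sqrt_pos.mpr (by exact_mod_cast Nat.pos_of_ne_zero (by omega))

lemma sqrt_sq : Real.sqrt k * Real.sqrt k = k := Real.mul_self_sqrt (by positivity)

include hk in
lemma randic_eq : randicMatrix (G k) = M k := by
  ext u v
  rw [randicMatrix]
  cases u with
  | none =>
    cases v with
    | none =>
      rw [if_neg, M]
      simp [adj_none_iff]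
    | some q =>
      rw [if_pos (by simp [adj_none_iff]), M, degree_none, degree_some]
      rw [show ((2*k : ℕ) : ℝ) * ((2:ℕ) : ℝ) = 2^2 * k by push_cast; ring]
      rw [Real.sqrt_mul (by positivity), Real.sqrt_sq (by norm_num)]
  | some p =>
    cases v with
    | none =>
      rw [if_pos (by simp [adj_some_iff]), M, degree_none, degree_some]
      rw [show ((2:ℕ) : ℝ) * ((2*k : ℕ) : ℝ) = 2^2 * k by push_cast; ring]
      rw [Real.sqrt_mul (by positivity), Real.sqrt_sq (by norm_num)]
    | some q =>
      rw [M]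
      by_cases h : q = (p.1, p.2 + 1)
      · rw [if_pos (by simp [adj_some_iff, h]), if_pos h, degree_some, degree_some]
        rw [show ((2:ℕ) : ℝ) * ((2:ℕ) : ℝ) = 2^2 by norm_num, Real.sqrt_sq (by norm_num)]
      · rw [if_neg (by simp [adj_some_iff, h]), if_neg h]

lemma M_isSymm : (M k).IsHermitian := by
  ext u v
  simp only [Matrix.conjTranspose_apply, star_trivial]
  cases u <;> cases v <;> (try rfl) <;> simp only [M]
  all_goals exact if_congr (partner_eq_iff _ _) rfl rfl

noncomputable def M2 (k : ℕ) : Matrix (Vk k) (Vk k) ℝ := fun u v =>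
  match u, v with
  | none, none => 1/2
  | none, some _ => 1 / (4 * Real.sqrt k)
  | some _, none => 1 / (4 * Real.sqrt k)
  | some p, some q => 1/(4*k) + if p = q then 1/4 else 0

include hk in
lemma M_sq : M k * M k = M2 k := by
  have hs := sqrt_pos hk
  have hss := sqrt_sq (k := k)
  have hk0 : (0:ℝ) < k := by exact_mod_cast Nat.pos_of_ne_zero (by omega)
  ext u v
  rw [Matrix.mul_apply, Fintype.sum_option]
  cases u with
  | none =>
    cases v with
    | none =>
      simp only [M, M2, mul_zero, zero_add]
      rw [Finset.sum_const]
      simp only [Finset.card_univ, Fintype.card_prod, Fintype.card_fin, nsmul_eq_mul]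
      field_simp
      push_cast
      nlinarith [hss]
    | some q =>
      simp only [M, M2, zero_mul, zero_add]
      have hcond : ∀ r : Fin k × Fin 2, (q = (r.1, r.2+1)) = (r = (q.1, q.2+1)) :=
        fun r => propext (partner_eq_iff r q)
      simp only [hcond, mul_ite, mul_zero, Finset.sum_ite_eq', Finset.mem_univ, if_true]
      field_simp
      ring
  | some p =>
    cases v with
    | none =>
      simp only [M, M2, mul_zero, zero_add, ite_mul, zero_mul,
        Finset.sum_ite_eq', Finset.mem_univ, if_true]
      field_simp
      ring
    | some q =>
      simp only [M, M2]
      have hcond : ∀ r : Fin k × Fin 2, (q = (r.1, r.2+1)) = (r = (q.1, q.2+1)) :=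
        fun r => propext (partner_eq_iff r q)
      simp only [hcond, ite_mul, mul_ite, zero_mul, mul_zero,
        Finset.sum_ite_eq', Finset.mem_univ, if_true, partner_inj]
      rcases eq_or_ne p q with rfl | hpq
      · rw [if_pos rfl, if_pos rfl]
        field_simp
        nlinarith [hss]
      · rw [if_neg (Ne.symm hpq), if_neg hpq]
        field_simp
        nlinarith [hss]

include hk in
lemma M_cube : M k * M2 k = M2 k + (4:ℝ)⁻¹ • M k - (4:ℝ)⁻¹ • 1 := by
  have hs := sqrt_pos hk
  have hss := sqrt_sq (k := k)
  have hk0 : (0:ℝ) < k := by exact_mod_cast Nat.pos_of_ne_zero (by omega)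
  ext u v
  rw [Matrix.mul_apply, Fintype.sum_option]
  simp only [Matrix.sub_apply, Matrix.add_apply, Matrix.smul_apply, Matrix.one_apply,
    smul_eq_mul]
  cases u with
  | none =>
    cases v with
    | none =>
      simp only [M, M2, zero_mul, zero_add, if_pos rfl]
      rw [Finset.sum_const]
      simp only [Finset.card_univ, Fintype.card_prod, Fintype.card_fin, nsmul_eq_mul]
      field_simp
      rw [if_pos trivial]
      push_cast
      nlinarith [hss]
    | some q =>
      simp only [M, M2, zero_mul, zero_add, if_neg (by simp : ¬(none : Vk k) = some q),
        mul_add, mul_ite, mul_zero]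
      rw [Finset.sum_add_distrib, Finset.sum_const, Finset.sum_ite_eq' Finset.univ q]
      simp only [Finset.card_univ, Fintype.card_prod, Fintype.card_fin, nsmul_eq_mul,
        Finset.mem_univ, if_true]
      field_simp
      push_cast
      ring_nf
  | some p =>
    cases v with
    | none =>
      simp only [M, M2, mul_zero, if_neg (by simp : ¬(some p : Vk k) = none), ite_mul, zero_mul]
      rw [Finset.sum_ite_eq' Finset.univ ((p.1, p.2+1) : Fin k × Fin 2)]
      simp only [Finset.mem_univ, if_true]
      field_simp
      ring_nf
    | some q =>
      simp only [M, M2, Option.some.injEq, ite_mul, zero_mul]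
      rw [Finset.sum_ite_eq' Finset.univ ((p.1, p.2+1) : Fin k × Fin 2)]
      simp only [Finset.mem_univ, if_true]
      by_cases h1 : q = (p.1, p.2 + 1)
      · rw [if_pos h1.symm, if_pos h1]
        have h2 : p ≠ q := fun h => some_ne_partner p (h.trans h1)
        rw [if_neg h2, if_neg h2]
        field_simp
        nlinarith [hss]
      · have h3 : ¬ ((p.1, p.2+1) = q) := fun h => h1 h.symm
        rw [if_neg h3, if_neg h1]
        rcases eq_or_ne p q with rfl | h4
        · rw [if_pos rfl, if_pos rfl]
          field_simp
          nlinarith [hss]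
        · rw [if_neg h4, if_neg h4]
          field_simp
          nlinarith [hss]

include hk in
lemma trace_M2 : (M2 k).trace = 1 + (k : ℝ)/2 := by
  have hk0 : (0:ℝ) < k := by exact_mod_cast Nat.pos_of_ne_zero (by omega)
  rw [Matrix.trace]
  rw [Fintype.sum_option]
  simp only [Matrix.diag_apply, M2, if_pos rfl]
  rw [Finset.sum_add_distrib, Finset.sum_const, Finset.sum_const]
  simp only [Finset.card_univ, Fintype.card_prod, Fintype.card_fin, nsmul_eq_mul]
  field_simp
  rw [if_pos trivial]
  push_cast
  ring

end FrdAux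

theorem stmt8 (m : ℕ) (hm : 2 ≤ m) :
    ∃ (V : Type) (_ : Fintype V) (_ : DecidableEq V) (G : SimpleGraph V),
      randicEnergy G = m := by
  obtain ⟨k, rfl⟩ : ∃ k, m = k + 1 := ⟨m - 1, by omega⟩
  have hk : 1 ≤ k := by omega
  refine ⟨FrdAux.Vk k, inferInstance, inferInstance, FrdAux.G k, ?_⟩
  set A := randicMatrix (FrdAux.G k) with hA
  have hM : A = FrdAux.M k := FrdAux.randic_eq hk
  have hherm : A.IsHermitian := by rw [hM]; exact FrdAux.M_isSymm
  rw [randicEnergy, dif_pos hherm]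
  have hcube : A * A * A = A * A + (4:ℝ)⁻¹ • A - (4:ℝ)⁻¹ • 1 := by
    rw [hM, Matrix.mul_assoc, FrdAux.M_sq hk, FrdAux.M_cube hk, ← FrdAux.M_sq hk]
  have habs : ∀ i, |hherm.eigenvalues i| = (2 * (hherm.eigenvalues i)^2 + 1) / 3 :=
    fun i => FrdAux.abs_of_cubic (FrdAux.eig_cubic hherm hcube i)
  have hsum : ∑ i, (hherm.eigenvalues i)^2 = 1 + (k : ℝ)/2 := by
    rw [FrdAux.sum_sq_eig hherm, hM, FrdAux.M_sq hk, FrdAux.trace_M2 hk]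
  have hcard : (Fintype.card (FrdAux.Vk k) : ℝ) = 2 * k + 1 := by
    simp [Fintype.card_option, Fintype.card_prod]
    ring
  calc ∑ i, |hherm.eigenvalues i|
      = ∑ i, (2 * (hherm.eigenvalues i)^2 + 1) / 3 := Finset.sum_congr rfl fun i _ => habs i
    _ = (2 * (∑ i, (hherm.eigenvalues i)^2) + Fintype.card (FrdAux.Vk k)) / 3 := by
        rw [← Finset.sum_div, Finset.sum_add_distrib, Finset.sum_const, ← Finset.mul_sum]
        simp [Finset.card_univ]
    _ = ((k : ℝ) + 1) := by
        rw [hsum, hcard]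
        ring
    _ = ((k + 1 : ℕ) : ℝ) := by push_cast; ring
end

section
/- Define Λ_1 = λ, Λ_2 = λ² − 1/4, and Λ_k = λΛ_{k−1} − (1/4)Λ_{k−2} for k ≥ 3. Then for n ≥ 5, the Randić characteristic polynomial of the path P_n equals (λ² − 1)(λΛ_{n−3} − (1/4)Λ_{n−4}). -/
open scoped Classical
open Polynomial

/-- `Λ k`: the determinant of the `k × k` tridiagonal matrix with `λ` on the
diagonal and `-1/2` off the diagonal, given by `Λ 1 = X`, `Λ 2 = X ^ 2 - 1/4`
and the recurrence `Λ k = X * Λ (k - 1) - (1/4) * Λ (k - 2)`. -/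
noncomputable def Lam : ℕ → Polynomial ℝ
  | 0 => 1
  | 1 => Polynomial.X
  | (k + 2) => Polynomial.X * Lam (k + 1) - Polynomial.C (1 / 4) * Lam k

lemma Lam_add_two (k : ℕ) :
    Lam (k + 2) = X * Lam (k + 1) - C (1 / 4 : ℝ) * Lam k := by
  simp [Lam]

/-- A window of size `k` starting at `(off, off)` of the infinite matrix `g`. -/
noncomputable def Trid (g : ℕ → ℕ → Polynomial ℝ) (off k : ℕ) :
    Matrix (Fin k) (Fin k) (Polynomial ℝ) :=
  Matrix.of fun i j => g (off + i) (off + j)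

lemma Trid_det_step (g : ℕ → ℕ → Polynomial ℝ)
    (hg : ∀ p q, p + 2 ≤ q ∨ q + 2 ≤ p → g p q = 0) (off k : ℕ) :
    (Trid g off (k+2)).det =
      g off off * (Trid g (off+1) (k+1)).det
        - g off (off+1) * (g (off+1) off * (Trid g (off+2) k).det) := by
  have sub1 : (Trid g off (k+2)).submatrix Fin.succ ((0 : Fin (k+2)).succAbove)
      = Trid g (off+1) (k+1) := by
    refine Matrix.ext fun i j => ?_
    simp only [Matrix.submatrix_apply, Trid, Matrix.of_apply, Fin.succAbove_zero,
      Fin.val_succ]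
    rw [show off + (↑i + 1) = off + 1 + ↑i by omega,
      show off + (↑j + 1) = off + 1 + ↑j by omega]
  set B := (Trid g off (k+2)).submatrix Fin.succ ((1 : Fin (k+2)).succAbove) with hB
  have hsucc1 : ∀ j : Fin (k+1), (((1 : Fin (k+2)).succAbove j : ℕ)) =
      if (j : ℕ) < 1 then (j : ℕ) else (j : ℕ) + 1 := by
    intro j
    simp only [Fin.succAbove, Fin.lt_def]
    split_ifs with h1 h2 h3 <;> simp_all
  have hB00 : B 0 0 = g (off + 1) off := by
    simp only [hB, Matrix.submatrix_apply, Trid, Matrix.of_apply, Fin.val_succ]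
    rw [show ((((1 : Fin (k+2)).succAbove (0 : Fin (k+1))) : ℕ)) = 0 by
      rw [hsucc1]; simp]
    norm_num
  have hBsub : B.submatrix Fin.succ Fin.succ = Trid g (off+2) k := by
    refine Matrix.ext fun i j => ?_
    simp only [hB, Matrix.submatrix_apply, Trid, Matrix.of_apply, Fin.val_succ]
    rw [hsucc1]
    simp only [Fin.val_succ]
    rw [if_neg (by omega), show off + (↑i + 1 + 1) = off + 2 + ↑i by omega,
      show off + (↑j + 1 + 1) = off + 2 + ↑j by omega]
  have hdetB : B.det = g (off + 1) off * (Trid g (off+2) k).det := by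
    rw [Matrix.det_succ_column_zero, Fin.sum_univ_succ]
    have tail : ∀ i : Fin k,
        (-1 : Polynomial ℝ) ^ ((i.succ : Fin (k+1)) : ℕ) * B i.succ 0 *
          (B.submatrix (Fin.succAbove i.succ) Fin.succ).det = 0 := by
      intro i
      have : B i.succ 0 = 0 := by
        simp only [hB, Matrix.submatrix_apply, Trid, Matrix.of_apply, Fin.val_succ]
        rw [show ((((1 : Fin (k+2)).succAbove (0 : Fin (k+1))) : ℕ)) = 0 by
          rw [hsucc1]; simp]
        exact hg _ _ (Or.inr (by omega))
      rw [this]; ring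
    rw [Finset.sum_eq_zero fun i _ => tail i]
    have h0 : ((0 : Fin (k+1)) : ℕ) = 0 := rfl
    rw [hB00]
    rw [show (0 : Fin (k+1)).succAbove = Fin.succ from Fin.succAbove_zero, hBsub]
    simp [h0]
  rw [Matrix.det_succ_row_zero, Fin.sum_univ_succ, Fin.sum_univ_succ]
  have tail : ∀ j : Fin k,
      (-1 : Polynomial ℝ) ^ (((j.succ.succ : Fin (k+2))) : ℕ) *
        (Trid g off (k+2)) 0 j.succ.succ *
        ((Trid g off (k+2)).submatrix Fin.succ (Fin.succAbove j.succ.succ)).det = 0 := by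
    intro j
    have : (Trid g off (k+2)) 0 j.succ.succ = 0 := by
      simp only [Trid, Matrix.of_apply, Fin.val_succ, Fin.val_zero]
      exact hg _ _ (Or.inl (by omega))
    rw [this]; ring
  rw [Finset.sum_eq_zero fun j _ => tail j]
  have hA00 : (Trid g off (k+2)) 0 0 = g off off := by
    simp [Trid]
  have hA01 : (Trid g off (k+2)) 0 (Fin.succ 0) = g off (off+1) := by
    simp only [Trid, Matrix.of_apply, Fin.val_succ]
    norm_num
  rw [sub1, hA00, hA01,
    show (Fin.succ (0 : Fin (k+1))) = (1 : Fin (k+2)) from Fin.succ_zero_eq_one, ← hB,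
    hdetB]
  simp [Fin.val_zero]
  ring

/-- The interior tridiagonal entries: `X` on the diagonal, `-1/2` off it. -/
noncomputable def gI : ℕ → ℕ → Polynomial ℝ := fun p q =>
  if p = q then X else if p + 1 = q ∨ q + 1 = p then -C (1/2 : ℝ) else 0

lemma gI_trid : ∀ p q, p + 2 ≤ q ∨ q + 2 ≤ p → gI p q = 0 := by
  intro p q h
  simp only [gI]
  rw [if_neg (by omega), if_neg (by omega)]

lemma det_gI : ∀ k off, (Trid gI off k).det = Lam k := by
  intro k
  induction k using Nat.twoStepInduction with
  | zero => intro off; simp [Trid, Lam, Matrix.det_fin_zero]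
  | one => intro off; rw [Matrix.det_fin_one]; simp [Trid, gI, Lam]
  | more k ih1 ih2 =>
    intro off
    rw [Trid_det_step gI gI_trid off k, ih2, ih1]
    have h1 : gI off off = X := by simp [gI]
    have h2 : gI off (off+1) = -C (1/2:ℝ) := by
      simp only [gI]; rw [if_neg (by omega)]; simp
    have h3 : gI (off+1) off = -C (1/2:ℝ) := by
      simp only [gI]; rw [if_neg (by omega)]; simp
    rw [h1, h2, h3, Lam_add_two]
    rw [show (1/4:ℝ) = (1/2)*(1/2) by norm_num, C_mul]
    ring

/-- The entries of the characteristic matrix of the Randić matrix of `Pₙ`. -/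
noncomputable def gF (n : ℕ) : ℕ → ℕ → Polynomial ℝ := fun p q =>
  if p = q then X
  else if p + 1 = q ∨ q + 1 = p then
    -C (if p = 0 ∨ q = 0 ∨ p = n - 1 ∨ q = n - 1 then (1/Real.sqrt 2) else (1/2 : ℝ))
  else 0

lemma gF_trid (n : ℕ) : ∀ p q, p + 2 ≤ q ∨ q + 2 ≤ p → gF n p q = 0 := by
  intro p q h
  simp only [gF]
  rw [if_neg (by omega), if_neg (by omega)]

lemma gF_diag (n : ℕ) (p : ℕ) : gF n p p = X := by simp [gF]

lemma gF_int (n : ℕ) (p : ℕ) (hp : 1 ≤ p) (hp2 : p + 1 ≤ n - 2) :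
    gF n p (p+1) = -C (1/2:ℝ) ∧ gF n (p+1) p = -C (1/2:ℝ) := by
  constructor
  · simp only [gF]
    rw [if_neg (by omega), if_pos (by tauto), if_neg (by omega)]
  · simp only [gF]
    rw [if_neg (by omega), if_pos (by tauto), if_neg (by omega)]

lemma gF_last (n : ℕ) (hn : 5 ≤ n) :
    gF n (n-2) (n-1) = -C (1/Real.sqrt 2) ∧ gF n (n-1) (n-2) = -C (1/Real.sqrt 2) := by
  constructor
  · simp only [gF]
    rw [if_neg (by omega), if_pos (Or.inl (by omega)), if_pos (by tauto)]
  · simp only [gF]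
    rw [if_neg (by omega), if_pos (Or.inr (by omega)), if_pos (by tauto)]

lemma sqrt2_mul : (1/Real.sqrt 2 : ℝ) * (1/Real.sqrt 2) = 1/2 := by
  rw [div_mul_div_comm, one_mul, Real.mul_self_sqrt (by norm_num)]

lemma det_gF_two (n : ℕ) (hn : 5 ≤ n) :
    (Trid (gF n) (n-2) 2).det = X * Lam 1 - C (1/2 : ℝ) * Lam 0 := by
  rw [Matrix.det_fin_two]
  have e0 : (((0 : Fin 2)) : ℕ) = 0 := rfl
  have e1 : (((1 : Fin 2)) : ℕ) = 1 := rfl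
  simp only [Trid, Matrix.of_apply, e0, e1, Nat.add_zero]
  rw [show n - 2 + 1 = n - 1 by omega]
  rw [gF_diag, gF_diag, (gF_last n hn).1, (gF_last n hn).2]
  rw [show Lam 1 = X from rfl, show Lam 0 = 1 from rfl]
  rw [show (-C (1/Real.sqrt 2)) * -C (1/Real.sqrt 2)
      = C ((1/Real.sqrt 2) * (1/Real.sqrt 2)) by rw [C_mul]; ring, sqrt2_mul]
  ring

lemma det_gF_one (n : ℕ) (hn : 5 ≤ n) :
    (Trid (gF n) (n-1) 1).det = X := by
  rw [Matrix.det_fin_one]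
  have : (Trid (gF n) (n-1) 1) 0 0 = gF n (n-1) (n-1) := by
    simp [Trid]
  rw [this, gF_diag]

/-- Determinants of the trailing blocks of the characteristic matrix. -/
lemma det_gF_tail (n : ℕ) (hn : 5 ≤ n) :
    ∀ m, m + 2 ≤ n - 1 →
      (Trid (gF n) (n - (m+2)) (m+2)).det = X * Lam (m+1) - C (1/2 : ℝ) * Lam m := by
  intro m
  induction m using Nat.twoStepInduction with
  | zero =>
    intro _
    exact det_gF_two n hn
  | one =>
    intro h
    rw [show (1:ℕ)+2 = 1+2 from rfl, Trid_det_step (gF n) (gF_trid n) (n-(1+2)) 1]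
    rw [show n - (1+2) + 1 = n - 2 by omega, show n - (1+2) + 2 = n - 1 by omega]
    rw [det_gF_two n hn, det_gF_one n hn, gF_diag]
    have hint := gF_int n (n-(1+2)) (by omega) (by omega)
    rw [show n - (1+2) + 1 = n - 2 by omega] at hint
    rw [show n - (1+2) = n - 3 by omega] at hint ⊢
    rw [hint.1, hint.2]
    rw [show Lam (1+1) = X * Lam 1 - C (1/4:ℝ) * Lam 0 from Lam_add_two 0]
    rw [show Lam 1 = X from rfl, show Lam 0 = 1 from rfl,
      show (1/4:ℝ) = (1/2)*(1/2) by norm_num, C_mul]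
    ring
  | more m ih1 ih2 =>
    intro h
    rw [Trid_det_step (gF n) (gF_trid n) (n-(m+2+2)) (m+2)]
    have hint := gF_int n (n-(m+2+2)) (by omega) (by omega)
    rw [gF_diag, hint.1, hint.2]
    rw [show n - (m+2+2) + 1 = n - (m+1+2) by omega,
      show n - (m+2+2) + 2 = n - (m+2) by omega]
    rw [ih2 (by omega), ih1 (by omega)]
    rw [show Lam (m+2+1) = X * Lam (m+2) - C (1/4:ℝ) * Lam (m+1) from Lam_add_two (m+1),
      show Lam (m+2) = X * Lam (m+1) - C (1/4:ℝ) * Lam m from Lam_add_two m,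
      show (1/4:ℝ) = (1/2)*(1/2) by norm_num, C_mul]
    ring

lemma path_degree (n : ℕ) (hn : 2 ≤ n) (i : Fin n) :
    (SimpleGraph.pathGraph n).degree i
      = if (i : ℕ) = 0 ∨ (i : ℕ) = n - 1 then 1 else 2 := by
  rw [← SimpleGraph.card_neighborFinset_eq_degree]
  by_cases h0 : (i : ℕ) = 0
  · rw [if_pos (Or.inl h0)]
    rw [show (SimpleGraph.pathGraph n).neighborFinset i = {(⟨1, by omega⟩ : Fin n)} by
      ext j
      simp only [SimpleGraph.mem_neighborFinset, SimpleGraph.pathGraph_adj,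
        Finset.mem_singleton, Fin.ext_iff]
      omega]
    simp
  · by_cases h1 : (i : ℕ) = n - 1
    · rw [if_pos (Or.inr h1)]
      rw [show (SimpleGraph.pathGraph n).neighborFinset i = {(⟨n-2, by omega⟩ : Fin n)} by
        ext j
        simp only [SimpleGraph.mem_neighborFinset, SimpleGraph.pathGraph_adj,
          Finset.mem_singleton, Fin.ext_iff]
        omega]
      simp
    · rw [if_neg (by tauto)]
      rw [show (SimpleGraph.pathGraph n).neighborFinset i
          = {(⟨(i : ℕ) - 1, by omega⟩ : Fin n), (⟨(i : ℕ) + 1, by omega⟩ : Fin n)} by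
        ext j
        simp only [SimpleGraph.mem_neighborFinset, SimpleGraph.pathGraph_adj,
          Finset.mem_insert, Finset.mem_singleton, Fin.ext_iff]
        omega]
      rw [Finset.card_pair (by simp only [ne_eq, Fin.ext_iff]; omega)]

lemma charmatrix_eq (n : ℕ) (hn : 5 ≤ n) :
    Matrix.charmatrix (randicMatrix (SimpleGraph.pathGraph n)) = Trid (gF n) 0 n := by
  refine Matrix.ext fun i j => ?_
  have hdeg := path_degree n (by omega)
  by_cases hij : i = j
  · subst hij
    rw [Matrix.charmatrix_apply_eq]
    have : randicMatrix (SimpleGraph.pathGraph n) i i = 0 := by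
      simp [randicMatrix]
    rw [this]
    simp [Trid, gF]
  · rw [Matrix.charmatrix_apply_ne _ _ _ hij]
    have hvij : (i : ℕ) ≠ (j : ℕ) := fun h => hij (Fin.ext h)
    by_cases hadj : (SimpleGraph.pathGraph n).Adj i j
    · have hadj' : (i : ℕ) + 1 = (j : ℕ) ∨ (j : ℕ) + 1 = (i : ℕ) :=
        SimpleGraph.pathGraph_adj.mp hadj
      simp only [Trid, Matrix.of_apply, gF, zero_add, if_neg hvij, if_pos hadj']
      rw [randicMatrix, if_pos hadj]
      congr 1
      rw [hdeg i, hdeg j]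
      by_cases hb : (i : ℕ) = 0 ∨ (j : ℕ) = 0 ∨ (i : ℕ) = n - 1 ∨ (j : ℕ) = n - 1
      · rw [if_pos hb]
        have hij2 : ((if (i:ℕ) = 0 ∨ (i:ℕ) = n-1 then 1 else 2 : ℕ) : ℝ)
            * ((if (j:ℕ) = 0 ∨ (j:ℕ) = n-1 then 1 else 2 : ℕ) : ℝ) = 2 := by
          have hi := i.isLt; have hj := j.isLt
          split_ifs <;> norm_num <;> omega
        rw [hij2]
      · rw [if_neg hb]
        push_neg at hb
        rw [if_neg (by tauto), if_neg (by tauto)]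
        norm_num
    · have hnadj : ¬((i : ℕ) + 1 = (j : ℕ) ∨ (j : ℕ) + 1 = (i : ℕ)) :=
        fun h => hadj (SimpleGraph.pathGraph_adj.mpr h)
      simp only [Trid, Matrix.of_apply, gF, zero_add, if_neg hvij, if_neg hnadj]
      rw [randicMatrix, if_neg hadj]
      simp

theorem stmt11 (n : ℕ) (hn : 5 ≤ n) :
    (randicMatrix (SimpleGraph.pathGraph n)).charpoly =
      (X ^ 2 - 1) * (X * Lam (n - 3) - C (1 / 4) * Lam (n - 4)) := by
  obtain ⟨m, rfl⟩ : ∃ m, n = m + 5 := ⟨n - 5, by omega⟩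
  set n := m + 5 with hn5
  rw [Matrix.charpoly, charmatrix_eq n hn]
  rw [show n = (m+3)+2 by omega, Trid_det_step (gF n) (gF_trid n) 0 (m+3)]
  have h01 : gF n 0 1 = -C (1/Real.sqrt 2) := by
    simp only [gF]
    rw [if_neg (by omega), if_pos (by tauto), if_pos (by tauto)]
  have h10 : gF n 1 0 = -C (1/Real.sqrt 2) := by
    simp only [gF]
    rw [if_neg (by omega), if_pos (by tauto), if_pos (by tauto)]
  have hT1 : (Trid (gF n) (0+1) (m+2+2)).det
      = X * Lam (m+3) - C (1/2:ℝ) * Lam (m+2) := by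
    have := det_gF_tail n hn (m+2) (by omega)
    rw [show n - (m+2+2) = 0+1 by omega] at this
    rw [this]
  have hT2 : (Trid (gF n) (0+2) (m+1+2)).det
      = X * Lam (m+2) - C (1/2:ℝ) * Lam (m+1) := by
    have := det_gF_tail n hn (m+1) (by omega)
    rw [show n - (m+1+2) = 0+2 by omega] at this
    rw [this]
  rw [gF_diag, h01, h10, hT1, hT2]
  rw [show n - 3 = m + 2 by omega, show n - 4 = m + 1 by omega]
  rw [show (-C (1/Real.sqrt 2)) * (-C (1/Real.sqrt 2)
        * (X * Lam (m+2) - C (1/2:ℝ) * Lam (m+1)))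
      = C ((1/Real.sqrt 2) * (1/Real.sqrt 2))
        * (X * Lam (m+2) - C (1/2:ℝ) * Lam (m+1)) by rw [C_mul]; ring,
    sqrt2_mul]
  rw [show Lam (m+3) = X * Lam (m+2) - C (1/4:ℝ) * Lam (m+1) from Lam_add_two (m+1)]
  rw [show (1/4:ℝ) = (1/2)*(1/2) by norm_num, C_mul]
  have h2 : (2 : Polynomial ℝ) * C (1/2:ℝ) = 1 := by
    rw [show (2 : Polynomial ℝ) = C (2:ℝ) from (map_ofNat C 2).symm, ← C_mul]
    norm_num
  linear_combination (-(X * Lam (m+2))) * h2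
end

section
/- For m, n ≥ 2 and any edge e of K_{m,n}, the Randić characteristic polynomial of K_{m,n} − e is λ^{m+n−4}(λ² − 1)(λ² − 1/(mn)). -/
open scoped Classical
open Polynomial

namespace Stmt18Aux

set_option maxHeartbeats 1600000

open Matrix

theorem my_det_fin_four {R : Type*} [CommRing R] (A : Matrix (Fin 4) (Fin 4) R) :
    A.det =
      A 0 0 * (A 1 1 * A 2 2 * A 3 3 - A 1 1 * A 2 3 * A 3 2 - A 1 2 * A 2 1 * A 3 3
        + A 1 2 * A 2 3 * A 3 1 + A 1 3 * A 2 1 * A 3 2 - A 1 3 * A 2 2 * A 3 1)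
      - A 0 1 * (A 1 0 * A 2 2 * A 3 3 - A 1 0 * A 2 3 * A 3 2 - A 1 2 * A 2 0 * A 3 3
        + A 1 2 * A 2 3 * A 3 0 + A 1 3 * A 2 0 * A 3 2 - A 1 3 * A 2 2 * A 3 0)
      + A 0 2 * (A 1 0 * A 2 1 * A 3 3 - A 1 0 * A 2 3 * A 3 1 - A 1 1 * A 2 0 * A 3 3
        + A 1 1 * A 2 3 * A 3 0 + A 1 3 * A 2 0 * A 3 1 - A 1 3 * A 2 1 * A 3 0)
      - A 0 3 * (A 1 0 * A 2 1 * A 3 2 - A 1 0 * A 2 2 * A 3 1 - A 1 1 * A 2 0 * A 3 2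
        + A 1 1 * A 2 2 * A 3 0 + A 1 2 * A 2 0 * A 3 1 - A 1 2 * A 2 1 * A 3 0) := by
  rw [Matrix.det_succ_row_zero]
  simp only [Fin.sum_univ_four, Matrix.det_fin_three, submatrix_apply]
  norm_num [Fin.succAbove, Fin.lt_def, Fin.ext_iff]
  simp only [show (Fin.succ 2 : Fin 4) = 3 from rfl, show ((3:Fin 4):ℕ) = 3 from rfl,
    show (Fin.castSucc 2 : Fin 4) = 2 from rfl]
  norm_num
  ring

lemma det_smul_one_sub_mul {K : Type*} [Field K] {p q : Type*} [Fintype p] [Fintype q]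
    [DecidableEq p] [DecidableEq q] {x : K} (hx : x ≠ 0) (A : Matrix p q K) (B : Matrix q p K) :
    x ^ (Fintype.card q) * (x • (1 : Matrix p p K) - A * B).det =
      x ^ (Fintype.card p) * (x • (1 : Matrix q q K) - B * A).det := by
  have h1 : x • (1 : Matrix p p K) - A * B = x • ((1 : Matrix p p K) + (-(x⁻¹ • A)) * B) := by
    rw [smul_add, Matrix.neg_mul, smul_neg, Matrix.smul_mul, smul_smul, mul_inv_cancel₀ hx,
      one_smul, ← sub_eq_add_neg]
  have h2 : x • (1 : Matrix q q K) - B * A = x • ((1 : Matrix q q K) + B * (-(x⁻¹ • A))) := by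
    rw [smul_add, Matrix.mul_neg, smul_neg, Matrix.mul_smul, smul_smul, mul_inv_cancel₀ hx,
      one_smul, ← sub_eq_add_neg]
  rw [h1, h2, det_smul, det_smul, det_one_add_mul_comm]
  ring

set_option synthInstance.maxHeartbeats 800000 in
lemma charpoly_map_frac {K : Type*} [Field K] {r : Type*} [Fintype r] [DecidableEq r]
    (M : Matrix r r K) :
    algebraMap K[X] (RatFunc K) M.charpoly =
      ((algebraMap K[X] (RatFunc K) X) • (1 : Matrix r r (RatFunc K))
        - M.map ((algebraMap K[X] (RatFunc K)).comp Polynomial.C)).det := by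
  rw [Matrix.charpoly, RingHom.map_det]
  congr 1
  apply Matrix.ext
  intro i j
  by_cases h : i = j
  · subst h
    simp [charmatrix_apply_eq, Matrix.one_apply, Matrix.smul_apply]
  · simp [charmatrix_apply_ne _ _ _ h, Matrix.one_apply_ne h, Matrix.smul_apply, h]

set_option synthInstance.maxHeartbeats 800000 in
lemma charpoly_mul_comm_rect {K : Type*} [Field K] {p q : Type*} [Fintype p] [Fintype q]
    [DecidableEq p] [DecidableEq q] (A : Matrix p q K) (B : Matrix q p K) :
    X ^ (Fintype.card q) * (A * B).charpoly = X ^ (Fintype.card p) * (B * A).charpoly := by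
  apply RatFunc.algebraMap_injective K
  set φ := algebraMap K[X] (RatFunc K) with hφdef
  have hx : φ X ≠ 0 := fun h =>
    Polynomial.X_ne_zero ((map_eq_zero_iff φ (RatFunc.algebraMap_injective K)).1 h)
  set ψ := φ.comp (Polynomial.C (R := K)) with hψdef
  rw [_root_.map_mul, _root_.map_mul, map_pow, map_pow, charpoly_map_frac, charpoly_map_frac,
    Matrix.map_mul, Matrix.map_mul]
  exact det_smul_one_sub_mul hx (A.map ψ) (B.map ψ)

variable {m n : ℕ}

def u (a₀ : Fin m) : Fin m ⊕ Fin n → ℝ := Sum.elim (fun a => if a = a₀ then 0 else 1) (fun _ => 0)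
def v (b₀ : Fin n) : Fin m ⊕ Fin n → ℝ := Sum.elim (fun _ => 0) (fun b => if b = b₀ then 0 else 1)
def ea (a₀ : Fin m) : Fin m ⊕ Fin n → ℝ := Sum.elim (fun a => if a = a₀ then 1 else 0) (fun _ => 0)
def eb (b₀ : Fin n) : Fin m ⊕ Fin n → ℝ := Sum.elim (fun _ => 0) (fun b => if b = b₀ then 1 else 0)

noncomputable def Wm (a₀ : Fin m) (b₀ : Fin n) : Matrix (Fin m ⊕ Fin n) (Fin 4) ℝ :=
  fun i k => ![u a₀ i, v b₀ i, ea a₀ i, eb b₀ i] k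

noncomputable def Bm (a₀ : Fin m) (b₀ : Fin n) : Matrix (Fin 4) (Fin m ⊕ Fin n) ℝ :=
  fun k j =>
    ![(1 / Real.sqrt (n * m)) * v b₀ j + (1 / Real.sqrt (n * ((m:ℝ)-1))) * eb b₀ j,
      (1 / Real.sqrt (n * m)) * u a₀ j + (1 / Real.sqrt (((n:ℝ)-1) * m)) * ea a₀ j,
      (1 / Real.sqrt (((n:ℝ)-1) * m)) * v b₀ j,
      (1 / Real.sqrt (n * ((m:ℝ)-1))) * u a₀ j] k

lemma sum_ite_ne {N : ℕ} (b₀ : Fin N) (c : ℝ) :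
    ∑ b : Fin N, (if b = b₀ then 0 else c) = ((N:ℝ) - 1) * c := by
  have : ∀ b : Fin N, (if b = b₀ then (0:ℝ) else c) = c - (if b = b₀ then c else 0) := by
    intro b; split <;> ring
  rw [Finset.sum_congr rfl (fun b _ => this b), Finset.sum_sub_distrib,
    Finset.sum_ite_eq' Finset.univ b₀ (fun _ => c)]
  simp [Finset.card_univ, mul_comm]
  ring

lemma hBW (a₀ : Fin m) (b₀ : Fin n) :
    Bm a₀ b₀ * Wm a₀ b₀ =
      !![0, (1 / Real.sqrt (n * m)) * ((n:ℝ)-1), 0, 1 / Real.sqrt (n * ((m:ℝ)-1));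
         (1 / Real.sqrt (n * m)) * ((m:ℝ)-1), 0, 1 / Real.sqrt (((n:ℝ)-1) * m), 0;
         0, (1 / Real.sqrt (((n:ℝ)-1) * m)) * ((n:ℝ)-1), 0, 0;
         (1 / Real.sqrt (n * ((m:ℝ)-1))) * ((m:ℝ)-1), 0, 0, 0] := by
  ext k l
  rw [Matrix.mul_apply, Fintype.sum_sum_type]
  fin_cases k <;> fin_cases l <;>
    simp +contextual [Wm, Bm, u, v, ea, eb, ite_mul, mul_ite, Finset.sum_add_distrib,
      Finset.sum_ite_eq' Finset.univ, sum_ite_ne, Matrix.vecHead, Matrix.vecTail] <;>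
    ring

lemma charpoly_four (hm : 2 ≤ m) (hn : 2 ≤ n) :
    (!![0, (1 / Real.sqrt (n * m)) * ((n:ℝ)-1), 0, 1 / Real.sqrt (n * ((m:ℝ)-1));
       (1 / Real.sqrt (n * m)) * ((m:ℝ)-1), 0, 1 / Real.sqrt (((n:ℝ)-1) * m), 0;
       0, (1 / Real.sqrt (((n:ℝ)-1) * m)) * ((n:ℝ)-1), 0, 0;
       (1 / Real.sqrt (n * ((m:ℝ)-1))) * ((m:ℝ)-1), 0, 0, 0]).charpoly
      = (X^2 - 1) * (X^2 - C (1 / ((m:ℝ) * n))) := by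
  have hm1 : (2:ℝ) ≤ m := by exact_mod_cast hm
  have hn1 : (2:ℝ) ≤ n := by exact_mod_cast hn
  have hmpos : (0:ℝ) < m := by linarith
  have hnpos : (0:ℝ) < n := by linarith
  have hα : (1 / Real.sqrt (n * m)) * (1 / Real.sqrt (n * m)) = 1 / ((n:ℝ) * m) := by
    rw [div_mul_div_comm, Real.mul_self_sqrt (by positivity), one_mul]
  have hβ : (1 / Real.sqrt (n * ((m:ℝ)-1))) * (1 / Real.sqrt (n * ((m:ℝ)-1)))
      = 1 / ((n:ℝ) * ((m:ℝ)-1)) := by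
    rw [div_mul_div_comm, Real.mul_self_sqrt (by nlinarith), one_mul]
  have hγ : (1 / Real.sqrt (((n:ℝ)-1) * m)) * (1 / Real.sqrt (((n:ℝ)-1) * m))
      = 1 / ((((n:ℝ)-1)) * m) := by
    rw [div_mul_div_comm, Real.mul_self_sqrt (by nlinarith), one_mul]
  rw [Matrix.charpoly, my_det_fin_four]
  simp +decide only [charmatrix_apply, Matrix.diagonal_apply, Matrix.cons_val',
    Matrix.cons_val_zero, Matrix.cons_val_one, Matrix.head_cons, Matrix.empty_val',
    Matrix.cons_val_fin_one, Matrix.head_fin_const, Matrix.tail_cons, if_true, if_false,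
    Matrix.cons_val_two, Matrix.cons_val_three, Matrix.vecHead, Matrix.vecTail, Function.comp,
    map_zero, _root_.map_mul, map_sub, _root_.map_one, Matrix.of_apply, Matrix.cons_val_succ]
  have hm1' : (0:ℝ) < (m:ℝ) - 1 := by linarith
  have hn1' : (0:ℝ) < (n:ℝ) - 1 := by linarith
  have hS : (1 / Real.sqrt (n * m)) * (1 / Real.sqrt (n * m)) * (((n:ℝ)-1)*(((m:ℝ)-1)))
      + (1 / Real.sqrt (((n:ℝ)-1) * m)) * (1 / Real.sqrt (((n:ℝ)-1) * m)) * ((n:ℝ)-1)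
      + (1 / Real.sqrt (n * ((m:ℝ)-1))) * (1 / Real.sqrt (n * ((m:ℝ)-1))) * ((m:ℝ)-1)
      = 1 + 1 / ((m:ℝ)*n) := by
    rw [hα, hβ, hγ]
    field_simp
    ring
  have hP : ((1 / Real.sqrt (n * ((m:ℝ)-1))) * (1 / Real.sqrt (n * ((m:ℝ)-1))))
      * ((1 / Real.sqrt (((n:ℝ)-1) * m)) * (1 / Real.sqrt (((n:ℝ)-1) * m)))
      * (((n:ℝ)-1)*((m:ℝ)-1)) = 1 / ((m:ℝ)*n) := by
    rw [hβ, hγ]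
    field_simp
  have HS := congrArg (Polynomial.C (R := ℝ)) hS
  have HP := congrArg (Polynomial.C (R := ℝ)) hP
  simp only [map_add, _root_.map_mul, map_sub, _root_.map_one, map_div₀] at HS HP
  linear_combination HP - X^2 * HS

lemma degree_left (hn : 2 ≤ n) (a₀ : Fin m) (b₀ : Fin n) (a : Fin m) :
    (((completeBipartiteGraph (Fin m) (Fin n)).deleteEdges
        {s(Sum.inl a₀, Sum.inr b₀)}).degree (Sum.inl a) : ℝ)
      = if a = a₀ then (n:ℝ) - 1 else (n:ℝ) := by
  have h : ((completeBipartiteGraph (Fin m) (Fin n)).deleteEdges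
        {s(Sum.inl a₀, Sum.inr b₀)}).neighborFinset (Sum.inl a)
      = (Finset.univ.filter fun b : Fin n => ¬(a = a₀ ∧ b = b₀)).map
          ⟨Sum.inr, Sum.inr_injective⟩ := by
    ext w
    cases w <;> simp [SimpleGraph.mem_neighborFinset, Sym2.eq_iff, and_comm]
  have hnat : ((completeBipartiteGraph (Fin m) (Fin n)).deleteEdges
        {s(Sum.inl a₀, Sum.inr b₀)}).degree (Sum.inl a) = if a = a₀ then n - 1 else n := by
    rw [SimpleGraph.degree, h, Finset.card_map]
    by_cases ha : a = a₀
    · simp only [ha, true_and, Finset.filter_not, Finset.filter_eq']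
      rw [Finset.card_sdiff_of_subset (by simp)]
      simp
    · simp [ha]
  rw [hnat, apply_ite (Nat.cast : ℕ → ℝ), Nat.cast_sub (by omega), Nat.cast_one]

lemma degree_right (hm : 2 ≤ m) (a₀ : Fin m) (b₀ : Fin n) (b : Fin n) :
    (((completeBipartiteGraph (Fin m) (Fin n)).deleteEdges
        {s(Sum.inl a₀, Sum.inr b₀)}).degree (Sum.inr b) : ℝ)
      = if b = b₀ then (m:ℝ) - 1 else (m:ℝ) := by
  have h : ((completeBipartiteGraph (Fin m) (Fin n)).deleteEdges
        {s(Sum.inl a₀, Sum.inr b₀)}).neighborFinset (Sum.inr b)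
      = (Finset.univ.filter fun a : Fin m => ¬(a = a₀ ∧ b = b₀)).map
          ⟨Sum.inl, Sum.inl_injective⟩ := by
    ext w
    cases w <;> simp [SimpleGraph.mem_neighborFinset, Sym2.eq_iff, and_comm]
  have hnat : ((completeBipartiteGraph (Fin m) (Fin n)).deleteEdges
        {s(Sum.inl a₀, Sum.inr b₀)}).degree (Sum.inr b) = if b = b₀ then m - 1 else m := by
    rw [SimpleGraph.degree, h, Finset.card_map]
    by_cases hb : b = b₀
    · simp only [hb, and_true, Finset.filter_not, Finset.filter_eq']
      rw [Finset.card_sdiff_of_subset (by simp)]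
      simp
    · simp [hb]
  rw [hnat, apply_ite (Nat.cast : ℕ → ℝ), Nat.cast_sub (by omega), Nat.cast_one]

lemma degree_left' (hn : 2 ≤ n) (a₀ : Fin m) (b₀ : Fin n) (a : Fin m)
    (inst : Fintype (((completeBipartiteGraph (Fin m) (Fin n)).deleteEdges
      {s(Sum.inl a₀, Sum.inr b₀)}).neighborSet (Sum.inl a))) :
    ((@SimpleGraph.degree _ ((completeBipartiteGraph (Fin m) (Fin n)).deleteEdges
      {s(Sum.inl a₀, Sum.inr b₀)}) (Sum.inl a) inst : ℕ) : ℝ)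
      = if a = a₀ then (n:ℝ) - 1 else (n:ℝ) := by
  convert degree_left hn a₀ b₀ a

lemma degree_right' (hm : 2 ≤ m) (a₀ : Fin m) (b₀ : Fin n) (b : Fin n)
    (inst : Fintype (((completeBipartiteGraph (Fin m) (Fin n)).deleteEdges
      {s(Sum.inl a₀, Sum.inr b₀)}).neighborSet (Sum.inr b))) :
    ((@SimpleGraph.degree _ ((completeBipartiteGraph (Fin m) (Fin n)).deleteEdges
      {s(Sum.inl a₀, Sum.inr b₀)}) (Sum.inr b) inst : ℕ) : ℝ)
      = if b = b₀ then (m:ℝ) - 1 else (m:ℝ) := by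
  convert degree_right hm a₀ b₀ b

lemma hR (hm : 2 ≤ m) (hn : 2 ≤ n) (a₀ : Fin m) (b₀ : Fin n) :
    randicMatrix ((completeBipartiteGraph (Fin m) (Fin n)).deleteEdges
        {s(Sum.inl a₀, Sum.inr b₀)}) = Wm a₀ b₀ * Bm a₀ b₀ := by
  funext i j
  rw [Matrix.mul_apply, Fin.sum_univ_four]
  cases i with
  | inl a =>
    cases j with
    | inl a' =>
      simp [randicMatrix, Wm, Bm, u, v, ea, eb]
    | inr b =>
      by_cases ha : a = a₀ <;> by_cases hb : b = b₀ <;>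
        simp [randicMatrix, Wm, Bm, u, v, ea, eb, ha, hb, Sym2.eq_iff,
          degree_left' hn a₀ b₀, degree_right' hm a₀ b₀]
  | inr b =>
    cases j with
    | inl a =>
      by_cases ha : a = a₀ <;> by_cases hb : b = b₀ <;>
        simp [randicMatrix, Wm, Bm, u, v, ea, eb, ha, hb, Sym2.eq_iff,
          degree_left' hn a₀ b₀, degree_right' hm a₀ b₀, mul_comm]
    | inr b' =>
      simp [randicMatrix, Wm, Bm, u, v, ea, eb]

lemma main_aux (hm : 2 ≤ m) (hn : 2 ≤ n) (a₀ : Fin m) (b₀ : Fin n) :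
    (randicMatrix ((completeBipartiteGraph (Fin m) (Fin n)).deleteEdges
        {s(Sum.inl a₀, Sum.inr b₀)})).charpoly =
      X ^ (m + n - 4) * (X ^ 2 - 1) * (X ^ 2 - C (1 / ((m : ℝ) * n))) := by
  have key := charpoly_mul_comm_rect (Wm a₀ b₀) (Bm a₀ b₀)
  rw [hBW a₀ b₀, charpoly_four hm hn] at key
  simp only [Fintype.card_fin, Fintype.card_sum] at key
  rw [hR hm hn a₀ b₀]
  apply mul_left_cancel₀ (pow_ne_zero 4 (Polynomial.X_ne_zero (R := ℝ)))
  rw [key]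
  conv_lhs => rw [show m + n = 4 + (m + n - 4) by omega, pow_add]
  ring

end Stmt18Aux

theorem stmt18 (m n : ℕ) (hm : 2 ≤ m) (hn : 2 ≤ n) (e : Sym2 (Fin m ⊕ Fin n))
    (he : e ∈ (completeBipartiteGraph (Fin m) (Fin n)).edgeSet) :
    (randicMatrix ((completeBipartiteGraph (Fin m) (Fin n)).deleteEdges {e})).charpoly =
      X ^ (m + n - 4) * (X ^ 2 - 1) * (X ^ 2 - C (1 / ((m : ℝ) * n))) := by
  induction e using Sym2.ind with
  | _ x y =>
    rw [SimpleGraph.mem_edgeSet] at he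
    cases x with
    | inl a₀ =>
      cases y with
      | inl a₁ => simp at he
      | inr b₀ => exact Stmt18Aux.main_aux hm hn a₀ b₀
    | inr b₀ =>
      cases y with
      | inl a₀ =>
        rw [Sym2.eq_swap]
        exact Stmt18Aux.main_aux hm hn a₀ b₀
      | inr b₁ => simp at he
end

section
/- For m, n ≥ 2 and any edge e of K_{m,n}, the Randić energy of K_{m,n} − e equals 2 + 2/√(mn). -/
open scoped Classical
open Polynomial

open Matrix
set_option maxHeartbeats 2000000

noncomputable abbrev Gd (m n : ℕ) (a : Fin m) (b : Fin n) : SimpleGraph (Fin m ⊕ Fin n) :=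
  (completeBipartiteGraph (Fin m) (Fin n)).deleteEdges {s(Sum.inl a, Sum.inr b)}

lemma deg_la {m n : ℕ} (a : Fin m) (b : Fin n) {inst : Fintype ((Gd m n a b).neighborSet (Sum.inl a))} : (Gd m n a b).degree (Sum.inl a) = n - 1 := by
  have h : (Gd m n a b).neighborFinset (Sum.inl a)
      = (Finset.univ.erase b).map ⟨Sum.inr, Sum.inr_injective⟩ := by
    ext w
    rcases w with i | j <;>
      simp [SimpleGraph.mem_neighborFinset, SimpleGraph.deleteEdges_adj, eq_comm]
  rw [SimpleGraph.degree, h, Finset.card_map, Finset.card_erase_of_mem (Finset.mem_univ b)]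
  simp

lemma deg_li {m n : ℕ} (a : Fin m) (b : Fin n) {i : Fin m} {inst : Fintype ((Gd m n a b).neighborSet (Sum.inl i))} (hi : i ≠ a) :
    (Gd m n a b).degree (Sum.inl i) = n := by
  have h : (Gd m n a b).neighborFinset (Sum.inl i)
      = Finset.univ.map ⟨Sum.inr, Sum.inr_injective⟩ := by
    ext w
    rcases w with i' | j <;>
      simp [SimpleGraph.mem_neighborFinset, SimpleGraph.deleteEdges_adj, hi]
  rw [SimpleGraph.degree, h, Finset.card_map]
  simp

lemma deg_rb {m n : ℕ} (a : Fin m) (b : Fin n) {inst : Fintype ((Gd m n a b).neighborSet (Sum.inr b))} : (Gd m n a b).degree (Sum.inr b) = m - 1 := by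
  have h : (Gd m n a b).neighborFinset (Sum.inr b)
      = (Finset.univ.erase a).map ⟨Sum.inl, Sum.inl_injective⟩ := by
    ext w
    rcases w with i | j <;>
      simp [SimpleGraph.mem_neighborFinset, SimpleGraph.deleteEdges_adj, eq_comm]
  rw [SimpleGraph.degree, h, Finset.card_map, Finset.card_erase_of_mem (Finset.mem_univ a)]
  simp

lemma deg_rj {m n : ℕ} (a : Fin m) (b : Fin n) {j : Fin n} {inst : Fintype ((Gd m n a b).neighborSet (Sum.inr j))} (hj : j ≠ b) :
    (Gd m n a b).degree (Sum.inr j) = m := by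
  have h : (Gd m n a b).neighborFinset (Sum.inr j)
      = Finset.univ.map ⟨Sum.inl, Sum.inl_injective⟩ := by
    ext w
    rcases w with i' | j' <;>
      simp [SimpleGraph.mem_neighborFinset, SimpleGraph.deleteEdges_adj, hj]
  rw [SimpleGraph.degree, h, Finset.card_map]
  simp

noncomputable def ent {m n : ℕ} (a : Fin m) (b : Fin n) (c1 c2 c3 : ℝ) (i : Fin m) (j : Fin n) : ℝ :=
  if i = a then (if j = b then 0 else c1) else (if j = b then c2 else c3)

lemma Rlr {m n : ℕ} (hm : 2 ≤ m) (hn : 2 ≤ n) (a : Fin m) (b : Fin n) (i : Fin m) (j : Fin n) :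
    randicMatrix (Gd m n a b) (Sum.inl i) (Sum.inr j) =
      ent a b (1 / Real.sqrt (((n:ℝ)-1) * m)) (1 / Real.sqrt ((n:ℝ) * ((m:ℝ)-1)))
        (1 / Real.sqrt ((n:ℝ) * m)) i j := by
  have hAdj : (Gd m n a b).Adj (Sum.inl i) (Sum.inr j) ↔ ¬(i = a ∧ j = b) := by
    simp [SimpleGraph.deleteEdges_adj]
  rw [randicMatrix, ent]
  by_cases hi : i = a <;> by_cases hj : j = b
  · rw [if_pos hi, if_pos hj, if_neg (by rw [hAdj]; tauto)]
  · rw [if_pos hi, if_neg hj, if_pos (by rw [hAdj]; tauto), hi, deg_la, deg_rj a b hj,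
      Nat.cast_sub (by omega)]
    norm_num
  · rw [if_neg hi, if_pos hj, if_pos (by rw [hAdj]; tauto), hj, deg_li a b hi, deg_rb,
      Nat.cast_sub (by omega)]
    norm_num
  · rw [if_neg hi, if_neg hj, if_pos (by rw [hAdj]; tauto), deg_li a b hi, deg_rj a b hj]

lemma Rll {m n : ℕ} (a : Fin m) (b : Fin n) (i i' : Fin m) :
    randicMatrix (Gd m n a b) (Sum.inl i) (Sum.inl i') = 0 := by
  rw [randicMatrix, if_neg]
  simp [SimpleGraph.deleteEdges_adj]

lemma Rrr {m n : ℕ} (a : Fin m) (b : Fin n) (j j' : Fin n) :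
    randicMatrix (Gd m n a b) (Sum.inr j) (Sum.inr j') = 0 := by
  rw [randicMatrix, if_neg]
  simp [SimpleGraph.deleteEdges_adj]

lemma Rherm {V : Type*} [Fintype V] (G : SimpleGraph V) : (randicMatrix G).IsHermitian := by
  ext x y
  simp only [conjTranspose_apply, randicMatrix, star_trivial]
  rw [SimpleGraph.adj_comm]
  by_cases h : G.Adj x y
  · rw [if_pos h, if_pos h, mul_comm]
  · rw [if_neg h, if_neg h]

lemma Rrl {m n : ℕ} (hm : 2 ≤ m) (hn : 2 ≤ n) (a : Fin m) (b : Fin n) (i : Fin m) (j : Fin n) :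
    randicMatrix (Gd m n a b) (Sum.inr j) (Sum.inl i) =
      ent a b (1 / Real.sqrt (((n:ℝ)-1) * m)) (1 / Real.sqrt ((n:ℝ) * ((m:ℝ)-1)))
        (1 / Real.sqrt ((n:ℝ) * m)) i j := by
  rw [← Rlr hm hn a b i j]
  exact (congrFun (congrFun (Rherm (Gd m n a b)) (Sum.inr j)) (Sum.inl i)).symm

lemma sum_ite_const {k : ℕ} (b : Fin k) (X Y : ℝ) :
    ∑ j, (if j = b then X else Y) = X + ((k:ℝ) - 1) * Y := by
  rw [← Finset.add_sum_erase _ _ (Finset.mem_univ b), if_pos rfl]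
  congr 1
  rw [Finset.sum_congr rfl (fun x hx => if_neg (Finset.ne_of_mem_erase hx)), Finset.sum_const,
    Finset.card_erase_of_mem (Finset.mem_univ b), Finset.card_univ, Fintype.card_fin,
    nsmul_eq_mul, Nat.cast_sub b.pos]
  norm_num

lemma sum_ite_mul {k : ℕ} (b : Fin k) (X Y : ℝ) (v : Fin k → ℝ) :
    ∑ j, (if j = b then X else Y) * v j = X * v b + Y * ((∑ j, v j) - v b) := by
  rw [← Finset.add_sum_erase _ _ (Finset.mem_univ b), if_pos rfl]
  congr 1
  rw [Finset.sum_congr rfl (fun x hx => by rw [if_neg (Finset.ne_of_mem_erase hx)]),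
    ← Finset.mul_sum, Finset.sum_erase_eq_sub (Finset.mem_univ b)]

noncomputable def entE {m : ℕ} (a : Fin m) (c d e : ℝ) (i i' : Fin m) : ℝ :=
  if i = a then (if i' = a then c else d) else (if i' = a then d else e)

section R2
variable {m n : ℕ} (a : Fin m) (b : Fin n)

lemma R2ll (hm : 2 ≤ m) (hn : 2 ≤ n) (i i' : Fin m) :
    (randicMatrix (Gd m n a b) * randicMatrix (Gd m n a b)) (Sum.inl i) (Sum.inl i') =
      entE a (((n:ℝ)-1) * (1 / Real.sqrt (((n:ℝ)-1) * m))^2)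
        (((n:ℝ)-1) * ((1 / Real.sqrt (((n:ℝ)-1) * m)) * (1 / Real.sqrt ((n:ℝ) * m))))
        ((1 / Real.sqrt ((n:ℝ) * ((m:ℝ)-1)))^2 + ((n:ℝ)-1) * (1 / Real.sqrt ((n:ℝ) * m))^2)
        i i' := by
  set c1 := 1 / Real.sqrt (((n:ℝ)-1) * m)
  set c2 := 1 / Real.sqrt ((n:ℝ) * ((m:ℝ)-1))
  set c3 := 1 / Real.sqrt ((n:ℝ) * m)
  rw [Matrix.mul_apply, Fintype.sum_sum_type]
  have h1 : ∀ i'' : Fin m, randicMatrix (Gd m n a b) (Sum.inl i) (Sum.inl i'') *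
      randicMatrix (Gd m n a b) (Sum.inl i'') (Sum.inl i') = 0 := by
    intro i''; rw [Rll]; ring
  rw [Finset.sum_congr rfl (fun x _ => h1 x), Finset.sum_const, smul_zero, zero_add]
  have h2 : ∀ j : Fin n, randicMatrix (Gd m n a b) (Sum.inl i) (Sum.inr j) *
      randicMatrix (Gd m n a b) (Sum.inr j) (Sum.inl i') =
      ent a b c1 c2 c3 i j * ent a b c1 c2 c3 i' j := by
    intro j; rw [Rlr hm hn, Rrl hm hn]
  rw [Finset.sum_congr rfl (fun j _ => h2 j)]
  rw [entE]
  by_cases hi : i = a <;> by_cases hi' : i' = a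
  · rw [if_pos hi, if_pos hi']
    have : ∀ j : Fin n, ent a b c1 c2 c3 i j * ent a b c1 c2 c3 i' j =
        if j = b then 0 else c1^2 := by
      intro j; rw [ent, ent, if_pos hi, if_pos hi']; split_ifs <;> ring
    rw [Finset.sum_congr rfl (fun j _ => this j), sum_ite_const]
    ring
  · rw [if_pos hi, if_neg hi']
    have : ∀ j : Fin n, ent a b c1 c2 c3 i j * ent a b c1 c2 c3 i' j =
        if j = b then 0 else c1*c3 := by
      intro j; rw [ent, ent, if_pos hi, if_neg hi']; split_ifs <;> ring
    rw [Finset.sum_congr rfl (fun j _ => this j), sum_ite_const]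
    ring
  · rw [if_neg hi, if_pos hi']
    have : ∀ j : Fin n, ent a b c1 c2 c3 i j * ent a b c1 c2 c3 i' j =
        if j = b then 0 else c1*c3 := by
      intro j; rw [ent, ent, if_neg hi, if_pos hi']; split_ifs <;> ring
    rw [Finset.sum_congr rfl (fun j _ => this j), sum_ite_const]
    ring
  · rw [if_neg hi, if_neg hi']
    have : ∀ j : Fin n, ent a b c1 c2 c3 i j * ent a b c1 c2 c3 i' j =
        if j = b then c2^2 else c3^2 := by
      intro j; rw [ent, ent, if_neg hi, if_neg hi']; split_ifs <;> ring
    rw [Finset.sum_congr rfl (fun j _ => this j), sum_ite_const]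

lemma R2rr (hm : 2 ≤ m) (hn : 2 ≤ n) (j j' : Fin n) :
    (randicMatrix (Gd m n a b) * randicMatrix (Gd m n a b)) (Sum.inr j) (Sum.inr j') =
      entE b (((m:ℝ)-1) * (1 / Real.sqrt ((n:ℝ) * ((m:ℝ)-1)))^2)
        (((m:ℝ)-1) * ((1 / Real.sqrt ((n:ℝ) * ((m:ℝ)-1))) * (1 / Real.sqrt ((n:ℝ) * m))))
        ((1 / Real.sqrt (((n:ℝ)-1) * m))^2 + ((m:ℝ)-1) * (1 / Real.sqrt ((n:ℝ) * m))^2)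
        j j' := by
  set c1 := 1 / Real.sqrt (((n:ℝ)-1) * m)
  set c2 := 1 / Real.sqrt ((n:ℝ) * ((m:ℝ)-1))
  set c3 := 1 / Real.sqrt ((n:ℝ) * m)
  rw [Matrix.mul_apply, Fintype.sum_sum_type]
  have h1 : ∀ j'' : Fin n, randicMatrix (Gd m n a b) (Sum.inr j) (Sum.inr j'') *
      randicMatrix (Gd m n a b) (Sum.inr j'') (Sum.inr j') = 0 := by
    intro j''; rw [Rrr]; ring
  rw [Finset.sum_congr rfl (fun x _ => h1 x), Finset.sum_const, smul_zero, add_zero]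
  have h2 : ∀ i : Fin m, randicMatrix (Gd m n a b) (Sum.inr j) (Sum.inl i) *
      randicMatrix (Gd m n a b) (Sum.inl i) (Sum.inr j') =
      ent a b c1 c2 c3 i j * ent a b c1 c2 c3 i j' := by
    intro i; rw [Rlr hm hn, Rrl hm hn]
  rw [Finset.sum_congr rfl (fun i _ => h2 i)]
  rw [entE]
  by_cases hj : j = b <;> by_cases hj' : j' = b
  · rw [if_pos hj, if_pos hj']
    have : ∀ i : Fin m, ent a b c1 c2 c3 i j * ent a b c1 c2 c3 i j' =
        if i = a then 0 else c2^2 := by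
      intro i; rw [ent, ent]; split_ifs <;> first | ring | tauto
    rw [Finset.sum_congr rfl (fun i _ => this i), sum_ite_const]
    ring
  · rw [if_pos hj, if_neg hj']
    have : ∀ i : Fin m, ent a b c1 c2 c3 i j * ent a b c1 c2 c3 i j' =
        if i = a then 0 else c2*c3 := by
      intro i; rw [ent, ent]; split_ifs <;> first | ring | tauto
    rw [Finset.sum_congr rfl (fun i _ => this i), sum_ite_const]
    ring
  · rw [if_neg hj, if_pos hj']
    have : ∀ i : Fin m, ent a b c1 c2 c3 i j * ent a b c1 c2 c3 i j' =
        if i = a then 0 else c2*c3 := by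
      intro i; rw [ent, ent]; split_ifs <;> first | ring | tauto
    rw [Finset.sum_congr rfl (fun i _ => this i), sum_ite_const]
    ring
  · rw [if_neg hj, if_neg hj']
    have : ∀ i : Fin m, ent a b c1 c2 c3 i j * ent a b c1 c2 c3 i j' =
        if i = a then c1^2 else c3^2 := by
      intro i; rw [ent, ent]; split_ifs <;> first | ring | tauto
    rw [Finset.sum_congr rfl (fun i _ => this i), sum_ite_const]

lemma R2lr (i : Fin m) (j : Fin n) :
    (randicMatrix (Gd m n a b) * randicMatrix (Gd m n a b)) (Sum.inl i) (Sum.inr j) = 0 := by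
  rw [Matrix.mul_apply, Fintype.sum_sum_type]
  have h1 : ∀ i'' : Fin m, randicMatrix (Gd m n a b) (Sum.inl i) (Sum.inl i'') *
      randicMatrix (Gd m n a b) (Sum.inl i'') (Sum.inr j) = 0 := by
    intro i''; rw [Rll]; ring
  have h2 : ∀ j'' : Fin n, randicMatrix (Gd m n a b) (Sum.inl i) (Sum.inr j'') *
      randicMatrix (Gd m n a b) (Sum.inr j'') (Sum.inr j) = 0 := by
    intro j''; rw [Rrr]; ring
  rw [Finset.sum_congr rfl (fun x _ => h1 x), Finset.sum_congr rfl (fun x _ => h2 x)]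
  simp

lemma R2rl (i : Fin m) (j : Fin n) :
    (randicMatrix (Gd m n a b) * randicMatrix (Gd m n a b)) (Sum.inr j) (Sum.inl i) = 0 := by
  rw [Matrix.mul_apply, Fintype.sum_sum_type]
  have h1 : ∀ i'' : Fin m, randicMatrix (Gd m n a b) (Sum.inr j) (Sum.inl i'') *
      randicMatrix (Gd m n a b) (Sum.inl i'') (Sum.inl i) = 0 := by
    intro i''; rw [Rll]; ring
  have h2 : ∀ j'' : Fin n, randicMatrix (Gd m n a b) (Sum.inr j) (Sum.inr j'') *
      randicMatrix (Gd m n a b) (Sum.inr j'') (Sum.inl i) = 0 := by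
    intro j''; rw [Rrr]; ring
  rw [Finset.sum_congr rfl (fun x _ => h1 x), Finset.sum_congr rfl (fun x _ => h2 x)]
  simp
end R2

section Traces
variable {m n : ℕ}

lemma sqrt_sq_facts (hm : 2 ≤ m) (hn : 2 ≤ n) :
    (1 / Real.sqrt (((n:ℝ)-1) * m))^2 = 1/(((n:ℝ)-1) * m) ∧
    (1 / Real.sqrt ((n:ℝ) * ((m:ℝ)-1)))^2 = 1/((n:ℝ) * ((m:ℝ)-1)) ∧
    (1 / Real.sqrt ((n:ℝ) * m))^2 = 1/((n:ℝ) * m) := by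
  have hM : (2:ℝ) ≤ (m:ℝ) := by exact_mod_cast hm
  have hN : (2:ℝ) ≤ (n:ℝ) := by exact_mod_cast hn
  refine ⟨?_, ?_, ?_⟩ <;>
    rw [div_pow, one_pow, Real.sq_sqrt (by nlinarith)]

lemma traceR2 (hm : 2 ≤ m) (hn : 2 ≤ n) (a : Fin m) (b : Fin n) :
    (randicMatrix (Gd m n a b) ^ 2).trace = 2 + 2/((m:ℝ) * n) := by
  obtain ⟨h1, h2, h3⟩ := sqrt_sq_facts hm hn
  have hM : (2:ℝ) ≤ (m:ℝ) := by exact_mod_cast hm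
  have hN : (2:ℝ) ≤ (n:ℝ) := by exact_mod_cast hn
  rw [pow_two, Matrix.trace]
  rw [Fintype.sum_sum_type]
  have gl : ∀ i : Fin m, (randicMatrix (Gd m n a b) * randicMatrix (Gd m n a b)).diag (Sum.inl i)
      = if i = a then ((n:ℝ)-1) * (1 / Real.sqrt (((n:ℝ)-1) * m))^2
        else (1 / Real.sqrt ((n:ℝ) * ((m:ℝ)-1)))^2 + ((n:ℝ)-1) * (1 / Real.sqrt ((n:ℝ) * m))^2 := by
    intro i
    rw [Matrix.diag_apply, R2ll a b hm hn, entE]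
    by_cases hi : i = a
    · rw [if_pos hi, if_pos hi, if_pos hi]
    · rw [if_neg hi, if_neg hi, if_neg hi]
  have gr : ∀ j : Fin n, (randicMatrix (Gd m n a b) * randicMatrix (Gd m n a b)).diag (Sum.inr j)
      = if j = b then ((m:ℝ)-1) * (1 / Real.sqrt ((n:ℝ) * ((m:ℝ)-1)))^2
        else (1 / Real.sqrt (((n:ℝ)-1) * m))^2 + ((m:ℝ)-1) * (1 / Real.sqrt ((n:ℝ) * m))^2 := by
    intro j
    rw [Matrix.diag_apply, R2rr a b hm hn, entE]
    by_cases hj : j = b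
    · rw [if_pos hj, if_pos hj, if_pos hj]
    · rw [if_neg hj, if_neg hj, if_neg hj]
  rw [Finset.sum_congr rfl (fun i _ => gl i), Finset.sum_congr rfl (fun j _ => gr j),
    sum_ite_const, sum_ite_const, h1, h2, h3]
  have z1 : (n:ℝ) - 1 ≠ 0 := by nlinarith
  have z2 : (m:ℝ) - 1 ≠ 0 := by nlinarith
  have z3 : (m:ℝ) ≠ 0 := by nlinarith
  have z4 : (n:ℝ) ≠ 0 := by nlinarith
  field_simp
  ring

lemma traceR4 (hm : 2 ≤ m) (hn : 2 ≤ n) (a : Fin m) (b : Fin n) :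
    (randicMatrix (Gd m n a b) ^ 4).trace = 2 + 2/((m:ℝ) * n)^2 := by
  obtain ⟨h1, h2, h3⟩ := sqrt_sq_facts hm hn
  have hM : (2:ℝ) ≤ (m:ℝ) := by exact_mod_cast hm
  have hN : (2:ℝ) ≤ (n:ℝ) := by exact_mod_cast hn
  set c1 := 1 / Real.sqrt (((n:ℝ)-1) * m) with hc1
  set c2 := 1 / Real.sqrt ((n:ℝ) * ((m:ℝ)-1)) with hc2
  set c3 := 1 / Real.sqrt ((n:ℝ) * m) with hc3
  set A := ((n:ℝ)-1) * c1^2 with hA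
  set B := ((n:ℝ)-1) * (c1 * c3) with hB
  set C := c2^2 + ((n:ℝ)-1) * c3^2 with hC
  set A' := ((m:ℝ)-1) * c2^2 with hA'
  set B' := ((m:ℝ)-1) * (c2 * c3) with hB'
  set C' := c1^2 + ((m:ℝ)-1) * c3^2 with hC'
  set S := randicMatrix (Gd m n a b) * randicMatrix (Gd m n a b) with hS
  have h4 : randicMatrix (Gd m n a b) ^ 4 = S * S := by
    rw [hS, show (4:ℕ) = 2 + 2 by rfl, pow_add, pow_two]
  rw [h4, Matrix.trace, Fintype.sum_sum_type]
  have gl : ∀ i : Fin m, (S * S).diag (Sum.inl i)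
      = if i = a then A^2 + ((m:ℝ)-1) * B^2 else B^2 + ((m:ℝ)-1) * C^2 := by
    intro i
    rw [Matrix.diag_apply, Matrix.mul_apply, Fintype.sum_sum_type]
    have e2 : ∀ j : Fin n, S (Sum.inl i) (Sum.inr j) * S (Sum.inr j) (Sum.inl i) = 0 := by
      intro j; rw [hS, R2lr, R2rl]; ring
    rw [Finset.sum_congr rfl (fun j _ => e2 j), Finset.sum_const, smul_zero, add_zero]
    have e1 : ∀ i' : Fin m, S (Sum.inl i) (Sum.inl i') * S (Sum.inl i') (Sum.inl i) =
        if i = a then (if i' = a then A^2 else B^2) else (if i' = a then B^2 else C^2) := by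
      intro i'
      rw [hS, R2ll a b hm hn, R2ll a b hm hn, entE, entE]
      split_ifs <;> ring
    by_cases hi : i = a
    · rw [Finset.sum_congr rfl (fun i' _ => e1 i'), if_pos hi]
      rw [Finset.sum_congr rfl (fun i' _ => if_pos hi), sum_ite_const]
    · rw [Finset.sum_congr rfl (fun i' _ => e1 i'), if_neg hi]
      rw [Finset.sum_congr rfl (fun i' _ => if_neg hi), sum_ite_const]
  have gr : ∀ j : Fin n, (S * S).diag (Sum.inr j)
      = if j = b then A'^2 + ((n:ℝ)-1) * B'^2 else B'^2 + ((n:ℝ)-1) * C'^2 := by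
    intro j
    rw [Matrix.diag_apply, Matrix.mul_apply, Fintype.sum_sum_type]
    have e2 : ∀ i : Fin m, S (Sum.inr j) (Sum.inl i) * S (Sum.inl i) (Sum.inr j) = 0 := by
      intro i; rw [hS, R2lr, R2rl]; ring
    rw [Finset.sum_congr rfl (fun i _ => e2 i), Finset.sum_const, smul_zero, zero_add]
    have e1 : ∀ j' : Fin n, S (Sum.inr j) (Sum.inr j') * S (Sum.inr j') (Sum.inr j) =
        if j = b then (if j' = b then A'^2 else B'^2) else (if j' = b then B'^2 else C'^2) := by
      intro j'
      rw [hS, R2rr a b hm hn, R2rr a b hm hn, entE, entE]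
      split_ifs <;> ring
    by_cases hj : j = b
    · rw [Finset.sum_congr rfl (fun j' _ => e1 j'), if_pos hj]
      rw [Finset.sum_congr rfl (fun j' _ => if_pos hj), sum_ite_const]
    · rw [Finset.sum_congr rfl (fun j' _ => e1 j'), if_neg hj]
      rw [Finset.sum_congr rfl (fun j' _ => if_neg hj), sum_ite_const]
  rw [Finset.sum_congr rfl (fun i _ => gl i), Finset.sum_congr rfl (fun j _ => gr j),
    sum_ite_const, sum_ite_const]
  have hB2 : B^2 = ((n:ℝ)-1)^2 * (c1^2 * c3^2) := by rw [hB]; ring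
  have hB'2 : B'^2 = ((m:ℝ)-1)^2 * (c2^2 * c3^2) := by rw [hB']; ring
  rw [hB2, hB'2, hA, hA', hC, hC', h1, h2, h3]
  have z1 : (n:ℝ) - 1 ≠ 0 := by nlinarith
  have z2 : (m:ℝ) - 1 ≠ 0 := by nlinarith
  have z3 : (m:ℝ) ≠ 0 := by nlinarith
  have z4 : (n:ℝ) ≠ 0 := by nlinarith
  field_simp
  ring

lemma trace_pow_eq {N : Type*} [Fintype N] [DecidableEq N] {A : Matrix N N ℝ}
    (hA : A.IsHermitian) (k : ℕ) : (A ^ k).trace = ∑ i, hA.eigenvalues i ^ k := by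
  set U : Matrix N N ℝ := (hA.eigenvectorUnitary : Matrix N N ℝ) with hU
  set V : Matrix N N ℝ := star (hA.eigenvectorUnitary : Matrix N N ℝ) with hV
  set D : Matrix N N ℝ := diagonal (RCLike.ofReal ∘ hA.eigenvalues) with hD
  have hU1 : V * U = 1 := Unitary.coe_star_mul_self _
  have hU2 : U * V = 1 := Unitary.coe_mul_star_self _
  have hk : A ^ k = U * D ^ k * V := by
    induction k with
    | zero => simpa using hU2.symm
    | succ k ih =>
        rw [pow_succ, ih]
        conv_lhs => rw [hA.spectral_theorem, Unitary.conjStarAlgAut_apply]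
        rw [Matrix.mul_assoc (U * D ^ k) V (U * D * V), ← Matrix.mul_assoc V (U * D) V,
          ← Matrix.mul_assoc V U D, hU1, Matrix.one_mul, ← Matrix.mul_assoc,
          Matrix.mul_assoc U (D ^ k) D, ← pow_succ]
  rw [hk, Matrix.trace_mul_comm, ← Matrix.mul_assoc, hU1, Matrix.one_mul, Matrix.diagonal_pow,
    Matrix.trace_diagonal]
  simp

lemma eig_class {m n : ℕ} (hm : 2 ≤ m) (hn : 2 ≤ n) (a : Fin m) (b : Fin n)
    (v : (Fin m ⊕ Fin n) → ℝ) (L : ℝ) (hv : v ≠ 0)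
    (heig : randicMatrix (Gd m n a b) *ᵥ v = L • v) :
    L = 0 ∨ L^2 = 1 ∨ L^2 = 1/((m:ℝ)*n) := by
  by_cases hL : L = 0
  · exact Or.inl hL
  right
  by_contra hcon
  push_neg at hcon
  obtain ⟨hL1, hL2⟩ := hcon
  obtain ⟨h1, h2, h3⟩ := sqrt_sq_facts hm hn
  have hM : (2:ℝ) ≤ (m:ℝ) := by exact_mod_cast hm
  have hN : (2:ℝ) ≤ (n:ℝ) := by exact_mod_cast hn
  set c1 := 1 / Real.sqrt (((n:ℝ)-1) * m) with hc1
  set c2 := 1 / Real.sqrt ((n:ℝ) * ((m:ℝ)-1)) with hc2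
  set c3 := 1 / Real.sqrt ((n:ℝ) * m) with hc3
  have hc1pos : 0 < c1 := by
    rw [hc1]
    apply div_pos one_pos
    apply Real.sqrt_pos.mpr
    nlinarith
  have hc3pos : 0 < c3 := by
    rw [hc3]
    apply div_pos one_pos
    apply Real.sqrt_pos.mpr
    nlinarith
  set X := v (Sum.inl a) with hX
  set Z := v (Sum.inr b) with hZ
  set Y := (∑ i, v (Sum.inl i)) - X with hY
  set W := (∑ j, v (Sum.inr j)) - Z with hW
  -- component equations
  have hcomp : ∀ x, (randicMatrix (Gd m n a b) *ᵥ v) x = L * v x := by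
    intro x; rw [heig]; rfl
  have mvl : ∀ i : Fin m, (randicMatrix (Gd m n a b) *ᵥ v) (Sum.inl i) =
      (if i = a then 0 else c2) * Z + (if i = a then c1 else c3) * W := by
    intro i
    rw [Matrix.mulVec, dotProduct, Fintype.sum_sum_type]
    have z1 : ∀ i' : Fin m, randicMatrix (Gd m n a b) (Sum.inl i) (Sum.inl i') * v (Sum.inl i') = 0 := by
      intro i'; rw [Rll]; ring
    rw [Finset.sum_congr rfl (fun x _ => z1 x), Finset.sum_const, smul_zero, zero_add]
    have z2 : ∀ j : Fin n, randicMatrix (Gd m n a b) (Sum.inl i) (Sum.inr j) * v (Sum.inr j) =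
        (if j = b then (if i = a then (0:ℝ) else c2) else (if i = a then c1 else c3)) * v (Sum.inr j) := by
      intro j; rw [Rlr hm hn, ent]
      by_cases hi : i = a <;> by_cases hj : j = b <;>
        simp only [hi, hj, if_true, if_false] <;> rfl
    rw [Finset.sum_congr rfl (fun j _ => z2 j), sum_ite_mul]
  have mvr : ∀ j : Fin n, (randicMatrix (Gd m n a b) *ᵥ v) (Sum.inr j) =
      (if j = b then 0 else c1) * X + (if j = b then c2 else c3) * Y := by
    intro j
    rw [Matrix.mulVec, dotProduct, Fintype.sum_sum_type]
    have z1 : ∀ j' : Fin n, randicMatrix (Gd m n a b) (Sum.inr j) (Sum.inr j') * v (Sum.inr j') = 0 := by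
      intro j'; rw [Rrr]; ring
    rw [Finset.sum_congr rfl (fun x _ => z1 x), Finset.sum_const, smul_zero, add_zero]
    have z2 : ∀ i : Fin m, randicMatrix (Gd m n a b) (Sum.inr j) (Sum.inl i) * v (Sum.inl i) =
        (if i = a then (if j = b then (0:ℝ) else c1) else (if j = b then c2 else c3)) * v (Sum.inl i) := by
      intro i; rw [Rrl hm hn, ent]
    rw [Finset.sum_congr rfl (fun i _ => z2 i), sum_ite_mul]
  have E1 : L * X = c1 * W := by
    have := (mvl a).symm.trans (hcomp (Sum.inl a))
    simpa using this.symm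
  have E2 : ∀ i : Fin m, i ≠ a → L * v (Sum.inl i) = c2 * Z + c3 * W := by
    intro i hi
    have := (mvl i).symm.trans (hcomp (Sum.inl i))
    rw [if_neg hi, if_neg hi] at this
    exact this.symm
  have E3 : L * Z = c2 * Y := by
    have := (mvr b).symm.trans (hcomp (Sum.inr b))
    simpa using this.symm
  have E4 : ∀ j : Fin n, j ≠ b → L * v (Sum.inr j) = c1 * X + c3 * Y := by
    intro j hj
    have := (mvr j).symm.trans (hcomp (Sum.inr j))
    rw [if_neg hj, if_neg hj] at this
    exact this.symm
  have E2' : L * Y = ((m:ℝ)-1) * (c2 * Z + c3 * W) := by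
    have hsum : ∑ i ∈ Finset.univ.erase a, (L * v (Sum.inl i)) = L * Y := by
      rw [Finset.sum_erase_eq_sub (Finset.mem_univ a), ← Finset.mul_sum, hY]
      ring
    rw [← hsum, Finset.sum_congr rfl (fun i hi => E2 i (Finset.ne_of_mem_erase hi)),
      Finset.sum_const, Finset.card_erase_of_mem (Finset.mem_univ a), Finset.card_univ,
      Fintype.card_fin, nsmul_eq_mul, Nat.cast_sub (by omega)]
    norm_num
  have E4' : L * W = ((n:ℝ)-1) * (c1 * X + c3 * Y) := by
    have hsum : ∑ j ∈ Finset.univ.erase b, (L * v (Sum.inr j)) = L * W := by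
      rw [Finset.sum_erase_eq_sub (Finset.mem_univ b), ← Finset.mul_sum, hW]
      ring
    rw [← hsum, Finset.sum_congr rfl (fun j hj => E4 j (Finset.ne_of_mem_erase hj)),
      Finset.sum_const, Finset.card_erase_of_mem (Finset.mem_univ b), Finset.card_univ,
      Fintype.card_fin, nsmul_eq_mul, Nat.cast_sub (by omega)]
    norm_num
  -- quadratic system
  have I1 : (L^2 - ((n:ℝ)-1) * c1^2) * X = ((n:ℝ)-1) * (c1*c3) * Y := by
    have : L * (L * X) = L * (c1 * W) := by rw [E1]
    calc (L^2 - ((n:ℝ)-1) * c1^2) * X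
        = L * (L * X) - ((n:ℝ)-1) * c1^2 * X := by ring
      _ = c1 * (L * W) - ((n:ℝ)-1) * c1^2 * X := by rw [this]; ring
      _ = c1 * (((n:ℝ)-1) * (c1 * X + c3 * Y)) - ((n:ℝ)-1) * c1^2 * X := by rw [E4']
      _ = ((n:ℝ)-1) * (c1*c3) * Y := by ring
  have I2 : (L^2 - ((m:ℝ)-1) * c2^2 - ((m:ℝ)-1)*((n:ℝ)-1) * c3^2) * Y
      = ((m:ℝ)-1)*((n:ℝ)-1) * (c1*c3) * X := by
    have hLY : L * (L * Y) = ((m:ℝ)-1) * (c2 * (L * Z) + c3 * (L * W)) := by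
      rw [E2']; ring
    rw [E3, E4'] at hLY
    linear_combination hLY
  -- coefficient identity
  have z1 : (n:ℝ) - 1 ≠ 0 := by nlinarith
  have z2 : (m:ℝ) - 1 ≠ 0 := by nlinarith
  have z3 : (m:ℝ) ≠ 0 := by nlinarith
  have z4 : (n:ℝ) ≠ 0 := by nlinarith
  have coefid : (L^2 - ((n:ℝ)-1) * c1^2) * (L^2 - ((m:ℝ)-1) * c2^2 - ((m:ℝ)-1)*((n:ℝ)-1) * c3^2)
      - ((m:ℝ)-1)*((n:ℝ)-1)^2 * (c1^2 * c3^2)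
      = (L^2 - 1) * (L^2 - 1/((m:ℝ)*n)) := by
    rw [h1, h2, h3]
    field_simp
    ring
  have hXzero : X = 0 := by
    have step : ((L^2 - 1) * (L^2 - 1/((m:ℝ)*n))) * X = 0 := by
      linear_combination (-X) * coefid + (L^2 - ((m:ℝ)-1) * c2^2 - ((m:ℝ)-1)*((n:ℝ)-1) * c3^2) * I1
        + (((n:ℝ)-1)*(c1*c3)) * I2
    have hne : (L^2 - 1) * (L^2 - 1/((m:ℝ)*n)) ≠ 0 :=
      mul_ne_zero (sub_ne_zero.mpr hL1) (sub_ne_zero.mpr hL2)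
    exact (mul_eq_zero.mp step).resolve_left hne
  have hYzero : Y = 0 := by
    have := I1
    rw [hXzero, mul_zero] at this
    have hne : ((n:ℝ)-1) * (c1*c3) ≠ 0 := by positivity
    have := this.symm
    rcases mul_eq_zero.mp this with h | h
    · exact absurd h hne
    · exact h
  have hZzero : Z = 0 := by
    have := E3
    rw [hYzero, mul_zero] at this
    exact (mul_eq_zero.mp this).resolve_left hL
  have hWzero : W = 0 := by
    have := E4'
    rw [hXzero, hYzero] at this
    simp at this
    rcases this with h | h
    · exact absurd h hL
    · exact h
  apply hv
  funext x
  rcases x with i | j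
  · by_cases hi : i = a
    · rw [hi]; exact hXzero
    · have := E2 i hi
      rw [hZzero, hWzero] at this
      simp at this
      rcases this with h | h
      · exact absurd h hL
      · exact h
  · by_cases hj : j = b
    · rw [hj]; exact hZzero
    · have := E4 j hj
      rw [hXzero, hYzero] at this
      simp at this
      rcases this with h | h
      · exact absurd h hL
      · exact h

lemma main_calc {m n : ℕ} (hm : 2 ≤ m) (hn : 2 ≤ n) (a : Fin m) (b : Fin n) :
    randicEnergy (Gd m n a b) = 2 + 2 / Real.sqrt ((m : ℝ) * n) := by
  have hH : (randicMatrix (Gd m n a b)).IsHermitian := Rherm _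
  rw [randicEnergy, dif_pos hH]
  obtain ⟨h1, h2, h3⟩ := sqrt_sq_facts hm hn
  have hM : (2:ℝ) ≤ (m:ℝ) := by exact_mod_cast hm
  have hN : (2:ℝ) ≤ (n:ℝ) := by exact_mod_cast hn
  set c := 1 / Real.sqrt ((n:ℝ) * m) with hc
  have hcpos : 0 < c := by
    rw [hc]
    apply div_pos one_pos
    apply Real.sqrt_pos.mpr
    nlinarith
  set d := 1 / (c * (c + 1)) with hd
  have hcne : c ≠ 0 := ne_of_gt hcpos
  have hc1ne : c + 1 ≠ 0 := by nlinarith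
  have habs : ∀ i, |hH.eigenvalues i| =
      (1 + d) * (hH.eigenvalues i)^2 - d * (hH.eigenvalues i)^4 := by
    intro i
    set L := hH.eigenvalues i with hLdef
    have hvne : (⇑(hH.eigenvectorBasis i) : (Fin m ⊕ Fin n) → ℝ) ≠ 0 := by
      intro hcontra
      apply hH.eigenvectorBasis.orthonormal.ne_zero i
      ext x
      exact congrFun hcontra x
    have hclass := eig_class hm hn a b _ L hvne (hH.mulVec_eigenvectorBasis i)
    rcases hclass with h | h | h
    · rw [h]; norm_num
    · have habs2 : |L|^2 = 1 := by rw [sq_abs]; exact h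
      have hfac : (|L| - 1) * (|L| + 1) = 0 := by linear_combination habs2
      have habs1 : |L| = 1 := by
        rcases mul_eq_zero.mp hfac with h' | h'
        · linarith [sub_eq_zero.mp h']
        · nlinarith [abs_nonneg L]
      rw [habs1, show L^4 = (L^2)^2 by ring, h]
      ring
    · have hsq : L^2 = c^2 := by rw [h, h3, mul_comm]
      have habs2 : |L|^2 = c^2 := by rw [sq_abs]; exact hsq
      have hfac : (|L| - c) * (|L| + c) = 0 := by linear_combination habs2
      have habs1 : |L| = c := by
        rcases mul_eq_zero.mp hfac with h' | h'
        · exact sub_eq_zero.mp h'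
        · nlinarith [abs_nonneg L]
      rw [habs1, show L^4 = (L^2)^2 by ring, hsq, hd]
      field_simp
      ring
  rw [Finset.sum_congr rfl (fun i _ => habs i)]
  rw [Finset.sum_sub_distrib, ← Finset.mul_sum, ← Finset.mul_sum,
    ← trace_pow_eq hH 2, ← trace_pow_eq hH 4, traceR2 hm hn, traceR4 hm hn]
  have hMN : (m:ℝ) * n = (n:ℝ) * m := by ring
  have hsqrt : Real.sqrt ((m:ℝ) * n) = Real.sqrt ((n:ℝ) * m) := by rw [hMN]
  have hinv : 1/((m:ℝ)*n) = c^2 := by rw [hMN, h3]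
  have hfin : 2 / Real.sqrt ((m:ℝ)*n) = 2 * c := by
    rw [hsqrt, hc]; ring
  rw [show 2 + 2/((m:ℝ)*n) = 2 + 2*(1/((m:ℝ)*n)) by ring,
    show 2 + 2/((m:ℝ)*n)^2 = 2 + 2*(1/((m:ℝ)*n))^2 by ring, hinv, hfin, hd]
  field_simp
  ring

theorem stmt19 (m n : ℕ) (hm : 2 ≤ m) (hn : 2 ≤ n) (e : Sym2 (Fin m ⊕ Fin n))
    (he : e ∈ (completeBipartiteGraph (Fin m) (Fin n)).edgeSet) :
    randicEnergy ((completeBipartiteGraph (Fin m) (Fin n)).deleteEdges {e}) =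
      2 + 2 / Real.sqrt ((m : ℝ) * n) := by
  induction e using Sym2.ind with
  | _ u v =>
    rw [SimpleGraph.mem_edgeSet] at he
    simp only [completeBipartiteGraph_adj] at he
    rcases u with a | b <;> rcases v with a' | b'
    · simp at he
    · exact main_calc hm hn a b'
    · rw [Sym2.eq_swap]
      exact main_calc hm hn a' b
    · simp at he
end Traces
end
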